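/- arXiv:0912.4872 — 3 statements merged into one kernel-verified Lean document; each statement's English description precedes it below -/
import Mathlib

section
/- The increase in optimal growth rate of a stock market due to causal side information is upper bounded by directed information: W*(X^n || Y^n) − W*(X^n) ≤ I(Y^n → X^n). -/
set_option linter.unusedSectionVars false
set_option linter.unusedVariables false
set_option maxHeartbeats 1000000


open scoped Classical
open Real

noncomputable section

variable {α β : Type} [Fintype α] [DecidableEq α] [Fintype β] [DecidableEq β]

/-- Probability of the event `E` under the joint pmf `p` of `(X^n, Y^n)`. -/
def pr {n : ℕ} (p : (Fin n → α) → (Fin n → β) → ℝ)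
    (E : (Fin n → α) → (Fin n → β) → Prop) : ℝ :=
  ∑ x, ∑ y, if E x y then p x y else 0

/-- `p` is a probability mass function on pairs of sequences. -/
def IsPmf {n : ℕ} (p : (Fin n → α) → (Fin n → β) → ℝ) : Prop :=
  (∀ x y, 0 ≤ p x y) ∧ ∑ x, ∑ y, p x y = 1

/-- The conditional pmf `p(x_i | x^{i-1}, y^{i-d})` evaluated along `(x, y)`. -/
def condX {n : ℕ} (p : (Fin n → α) → (Fin n → β) → ℝ) (d : ℕ) (i : Fin n)
    (x : Fin n → α) (y : Fin n → β) : ℝ :=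
  pr p (fun x' y' => (∀ j, j < i → x' j = x j) ∧ x' i = x i ∧
      ∀ j : Fin n, (j : ℕ) + d ≤ (i : ℕ) → y' j = y j) /
  pr p (fun x' y' => (∀ j, j < i → x' j = x j) ∧
      ∀ j : Fin n, (j : ℕ) + d ≤ (i : ℕ) → y' j = y j)

/-- The conditional pmf `p(y_i | y^{i-1}, x^{i-d})` evaluated along `(x, y)`. -/
def condY {n : ℕ} (p : (Fin n → α) → (Fin n → β) → ℝ) (d : ℕ) (i : Fin n)
    (x : Fin n → α) (y : Fin n → β) : ℝ :=
  pr p (fun x' y' => (∀ j, j < i → y' j = y j) ∧ y' i = y i ∧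
      ∀ j : Fin n, (j : ℕ) + d ≤ (i : ℕ) → x' j = x j) /
  pr p (fun x' y' => (∀ j, j < i → y' j = y j) ∧
      ∀ j : Fin n, (j : ℕ) + d ≤ (i : ℕ) → x' j = x j)

/-- Causally conditioned pmf `p(x^n || y^{n-d}) = ∏ᵢ p(xᵢ | x^{i-1}, y^{i-d})`. -/
def ccX {n : ℕ} (p : (Fin n → α) → (Fin n → β) → ℝ) (d : ℕ)
    (x : Fin n → α) (y : Fin n → β) : ℝ :=
  ∏ i, condX p d i x y

/-- Causally conditioned pmf `p(y^n || x^{n-d}) = ∏ᵢ p(yᵢ | y^{i-1}, x^{i-d})`. -/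
def ccY {n : ℕ} (p : (Fin n → α) → (Fin n → β) → ℝ) (d : ℕ)
    (x : Fin n → α) (y : Fin n → β) : ℝ :=
  ∏ i, condY p d i x y

/-- Marginal pmf of `X^n`. -/
def pX {n : ℕ} (p : (Fin n → α) → (Fin n → β) → ℝ) (x : Fin n → α) : ℝ := ∑ y, p x y

/-- Marginal pmf of `Y^n`. -/
def pY {n : ℕ} (p : (Fin n → α) → (Fin n → β) → ℝ) (y : Fin n → β) : ℝ := ∑ x, p x y

/-- `H(X^n)` in bits. -/
def HX {n : ℕ} (p : (Fin n → α) → (Fin n → β) → ℝ) : ℝ :=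
  -(∑ x, ∑ y, p x y * Real.logb 2 (pX p x))

/-- `H(Y^n)` in bits. -/
def HY {n : ℕ} (p : (Fin n → α) → (Fin n → β) → ℝ) : ℝ :=
  -(∑ x, ∑ y, p x y * Real.logb 2 (pY p y))

/-- Joint entropy `H(X^n, Y^n)` in bits. -/
def Hjoint {n : ℕ} (p : (Fin n → α) → (Fin n → β) → ℝ) : ℝ :=
  -(∑ x, ∑ y, p x y * Real.logb 2 (p x y))

/-- Conditional entropy `H(X_i | X^{i-1}, Y^{i-d})` in bits. -/
def HcondX {n : ℕ} (p : (Fin n → α) → (Fin n → β) → ℝ) (d : ℕ) (i : Fin n) : ℝ :=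
  -(∑ x, ∑ y, p x y * Real.logb 2 (condX p d i x y))

/-- Conditional entropy `H(Y_i | Y^{i-1}, X^{i-d})` in bits. -/
def HcondY {n : ℕ} (p : (Fin n → α) → (Fin n → β) → ℝ) (d : ℕ) (i : Fin n) : ℝ :=
  -(∑ x, ∑ y, p x y * Real.logb 2 (condY p d i x y))

/-- Causally conditional entropy `H(X^n || Y^{n-d}) = Σᵢ H(Xᵢ | X^{i-1}, Y^{i-d})`. -/
def HccX {n : ℕ} (p : (Fin n → α) → (Fin n → β) → ℝ) (d : ℕ) : ℝ := ∑ i, HcondX p d i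

/-- Causally conditional entropy `H(Y^n || X^{n-d})`. -/
def HccY {n : ℕ} (p : (Fin n → α) → (Fin n → β) → ℝ) (d : ℕ) : ℝ := ∑ i, HcondY p d i

/-- Conditional mutual information `I(Y^i; X_i | X^{i-1})`
(as the expectation of `log (p(xᵢ|x^{i-1},y^i) / p(xᵢ|x^{i-1}))`;
note `condX p n` is `p(xᵢ|x^{i-1})`, conditioning on no `y`'s at all). -/
def cmiYX {n : ℕ} (p : (Fin n → α) → (Fin n → β) → ℝ) (i : Fin n) : ℝ :=
  ∑ x, ∑ y, p x y * Real.logb 2 (condX p 0 i x y / condX p n i x y)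

/-- Conditional mutual information `I(X^i; Y_i | Y^{i-1})`. -/
def cmiXY {n : ℕ} (p : (Fin n → α) → (Fin n → β) → ℝ) (i : Fin n) : ℝ :=
  ∑ x, ∑ y, p x y * Real.logb 2 (condY p 0 i x y / condY p n i x y)

/-- Directed information `I(Y^n → X^n) = Σᵢ I(Y^i; X_i | X^{i-1})`. -/
def dirYX {n : ℕ} (p : (Fin n → α) → (Fin n → β) → ℝ) : ℝ := ∑ i, cmiYX p i

/-- Directed information `I(X^n → Y^n) = Σᵢ I(X^i; Y_i | Y^{i-1})`. -/
def dirXY {n : ℕ} (p : (Fin n → α) → (Fin n → β) → ℝ) : ℝ := ∑ i, cmiXY p i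

/-- Directed information `I(Y^{n-1} → X^n) = Σᵢ I(Y^{i-1}; X_i | X^{i-1})`
(the term for `i = 1` vanishes, so we may sum over all `i`). -/
def dirY1X {n : ℕ} (p : (Fin n → α) → (Fin n → β) → ℝ) : ℝ :=
  ∑ i, ∑ x, ∑ y, p x y * Real.logb 2 (condX p 1 i x y / condX p n i x y)

/-- Mutual information `I(X^n; Y^n)` in bits. -/
def miXY {n : ℕ} (p : (Fin n → α) → (Fin n → β) → ℝ) : ℝ :=
  ∑ x, ∑ y, p x y * Real.logb 2 (p x y / (pX p x * pY p y))

/-- A causal (nonanticipating) portfolio strategy on `m` stocks: `b i x y` is the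
portfolio used at time `i`; it lies in the simplex and depends only on the history
`(x^{i-1}, y^i)`. -/
def IsCausalPortfolio {n m : ℕ}
    (b : Fin n → (Fin n → α) → (Fin n → β) → (Fin m → ℝ)) : Prop :=
  (∀ i x y k, 0 ≤ b i x y k) ∧ (∀ i x y, ∑ k, b i x y k = 1) ∧
  (∀ i x x' y y', (∀ j, j < i → x j = x' j) → (∀ j, j ≤ i → y j = y' j) →
    b i x y = b i x' y')

/-- The growth `W(X^n||Y^n) = E[log ∏ᵢ b(x^{i-1},y^i)ᵀ xᵢ]`, where the stock vector
at time `i` is `v (x i) ∈ ℝ^m`. -/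
def stockW {n m : ℕ} (p : (Fin n → α) → (Fin n → β) → ℝ) (v : α → Fin m → ℝ)
    (b : Fin n → (Fin n → α) → (Fin n → β) → (Fin m → ℝ)) : ℝ :=
  ∑ x, ∑ y, p x y * Real.logb 2 (∏ i, ∑ k, b i x y k * v (x i) k)

section helpers
variable {n : ℕ} {p : (Fin n → α) → (Fin n → β) → ℝ}

lemma pr_nonneg (hp : ∀ x y, 0 ≤ p x y) (E) : 0 ≤ pr p E := by
  apply Finset.sum_nonneg; intro x _; apply Finset.sum_nonneg; intro y _
  split <;> simp [hp]

lemma pr_congr {E E'} (h : ∀ x y, E x y ↔ E' x y) : pr p E = pr p E' := by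
  unfold pr; apply Finset.sum_congr rfl; intro x _; apply Finset.sum_congr rfl; intro y _
  simp only [h]

lemma pr_mono (hp : ∀ x y, 0 ≤ p x y) {E E'} (h : ∀ x y, E x y → E' x y) :
    pr p E ≤ pr p E' := by
  apply Finset.sum_le_sum; intro x _; apply Finset.sum_le_sum; intro y _
  by_cases hE : E x y
  · simp [hE, h x y hE]
  · simp only [if_neg hE]; split <;> simp [hp]

lemma le_pr (hp : ∀ x y, 0 ≤ p x y) {E} {x y} (h : E x y) : p x y ≤ pr p E := by
  unfold pr
  calc p x y = ∑ y', if y' = y then (if E x y' then p x y' else 0) else 0 := by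
        rw [Finset.sum_ite_eq' Finset.univ y]; simp [h]
    _ ≤ ∑ y', if E x y' then p x y' else 0 := by
        apply Finset.sum_le_sum; intro y' _
        split
        · split <;> rename_i h1 h2
          · exact le_refl _
          · subst h1; exact absurd h h2
        · split <;> simp [hp]
    _ ≤ _ := by
        apply Finset.single_le_sum (f := fun x' => ∑ y', if E x' y' then p x' y' else 0)
          (fun x' _ => Finset.sum_nonneg fun y' _ => by split <;> simp [hp]) (Finset.mem_univ x)

lemma pr_true (hp : IsPmf p) : pr p (fun _ _ => True) = 1 := by
  unfold pr; simpa using hp.2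

lemma pr_single (x : Fin n → α) (y : Fin n → β) :
    pr p (fun x' y' => x' = x ∧ y' = y) = p x y := by
  unfold pr
  rw [Finset.sum_eq_single x]
  · rw [Finset.sum_eq_single y]
    · simp
    · intro y' _ hy'; simp [hy']
    · simp
  · intro x' _ hx'
    apply Finset.sum_eq_zero; intro y' _; simp [hx']
  · simp

lemma pr_partition (E : (Fin n → α) → (Fin n → β) → Prop) (i : Fin n) :
    ∑ c : β, pr p (fun x' y' => E x' y' ∧ y' i = c) = pr p E := by
  unfold pr
  rw [Finset.sum_comm]
  apply Finset.sum_congr rfl; intro x _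
  rw [Finset.sum_comm]
  apply Finset.sum_congr rfl; intro y _
  rw [Finset.sum_eq_single (y i)]
  · by_cases hE : E x y <;> simp [hE]
  · intro c _ hc; simp [fun h : E x y => hc, hc]; intro _ h; exact absurd h.symm hc
  · simp

-- end

section upd
variable {γ : Type} [Fintype γ] [DecidableEq γ] {n : ℕ}

lemma update_sum (i : Fin n) (f : (Fin n → γ) → ℝ) :
    ∑ y : Fin n → γ, ∑ c : γ, f (Function.update y i c)
      = (Fintype.card γ) * ∑ y : Fin n → γ, f y := by
  classical
  have key : ∀ c, ∀ y : Fin n → γ,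
      Function.update y i c = (Equiv.funSplitAt i γ).symm (c, ((Equiv.funSplitAt i γ) y).2) := by
    intro c y; funext j
    by_cases h : j = i
    · subst h; simp [Equiv.funSplitAt, Equiv.piSplitAt]
    · simp [Equiv.funSplitAt, Equiv.piSplitAt, h, Function.update_of_ne h]
  rw [Finset.sum_comm]
  calc ∑ c : γ, ∑ y : Fin n → γ, f (Function.update y i c)
      = ∑ c : γ, ∑ z : γ × ({j // j ≠ i} → γ), f ((Equiv.funSplitAt i γ).symm (c, z.2)) := by
        apply Finset.sum_congr rfl; intro c _
        rw [← Equiv.sum_comp (Equiv.funSplitAt i γ)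
          (fun z => f ((Equiv.funSplitAt i γ).symm (c, z.2)))]
        apply Finset.sum_congr rfl; intro y _
        rw [key c y]
    _ = ∑ c : γ, ∑ _a : γ, ∑ g : ({j // j ≠ i} → γ), f ((Equiv.funSplitAt i γ).symm (c, g)) := by
        apply Finset.sum_congr rfl; intro c _
        rw [Fintype.sum_prod_type]
    _ = (Fintype.card γ) * ∑ z : γ × ({j // j ≠ i} → γ), f ((Equiv.funSplitAt i γ).symm z) := by
        rw [Fintype.sum_prod_type, Finset.mul_sum]
        apply Finset.sum_congr rfl; intro c _
        rw [Finset.sum_const, nsmul_eq_mul, Fintype.card]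
    _ = _ := by
        rw [Equiv.sum_comp (Equiv.funSplitAt i γ).symm f]

lemma update_group_le (i : Fin n) (F G : (Fin n → γ) → ℝ)
    (hF : ∀ y, 0 ≤ F y) (hFdep : ∀ y c, F (Function.update y i c) = F y)
    (hG : ∀ y, 0 ≤ G y) (hGsum : ∀ y, ∑ c : γ, G (Function.update y i c) ≤ 1) :
    (Fintype.card γ : ℝ) * ∑ y, F y * G y ≤ ∑ y, F y := by
  have h1 : (Fintype.card γ : ℝ) * ∑ y, F y * G y
      = ∑ y, ∑ c, F (Function.update y i c) * G (Function.update y i c) := by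
    rw [update_sum i (fun y => F y * G y)]
  rw [h1]
  apply Finset.sum_le_sum; intro y _
  calc ∑ c, F (Function.update y i c) * G (Function.update y i c)
      = F y * ∑ c, G (Function.update y i c) := by
        rw [Finset.mul_sum]; apply Finset.sum_congr rfl; intro c _; rw [hFdep y c]
    _ ≤ F y * 1 := by
        apply mul_le_mul_of_nonneg_left (hGsum y) (hF y)
    _ = F y := mul_one _

end upd


section condlems
variable {n : ℕ} {p : (Fin n → α) → (Fin n → β) → ℝ}

lemma condY_nonneg (hp : ∀ x y, 0 ≤ p x y) (d i x y) : 0 ≤ condY p d i x y :=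
  div_nonneg (pr_nonneg hp _) (pr_nonneg hp _)

lemma condX_nonneg (hp : ∀ x y, 0 ≤ p x y) (d i x y) : 0 ≤ condX p d i x y :=
  div_nonneg (pr_nonneg hp _) (pr_nonneg hp _)

lemma condY_pos (hp : ∀ x y, 0 ≤ p x y) {d i x y} (h : 0 < p x y) : 0 < condY p d i x y := by
  unfold condY
  apply div_pos
  · exact lt_of_lt_of_le h (le_pr hp ⟨fun j _ => rfl, rfl, fun j _ => rfl⟩)
  · exact lt_of_lt_of_le h (le_pr hp ⟨fun j _ => rfl, fun j _ => rfl⟩)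

lemma condX_pos (hp : ∀ x y, 0 ≤ p x y) {d i x y} (h : 0 < p x y) : 0 < condX p d i x y := by
  unfold condX
  apply div_pos
  · exact lt_of_lt_of_le h (le_pr hp ⟨fun j _ => rfl, rfl, fun j _ => rfl⟩)
  · exact lt_of_lt_of_le h (le_pr hp ⟨fun j _ => rfl, fun j _ => rfl⟩)

lemma condY_update_sum (hp : ∀ x y, 0 ≤ p x y) (i : Fin n) (x : Fin n → α) (y : Fin n → β) :
    ∑ c : β, condY p 1 i x (Function.update y i c) ≤ 1 := by
  have hden : ∀ c : β, pr p (fun x' y' => (∀ j, j < i → y' j = Function.update y i c j) ∧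
      ∀ j : Fin n, (j : ℕ) + 1 ≤ (i : ℕ) → x' j = x j)
      = pr p (fun x' y' => (∀ j, j < i → y' j = y j) ∧
      ∀ j : Fin n, (j : ℕ) + 1 ≤ (i : ℕ) → x' j = x j) := by
    intro c; apply pr_congr; intro x' y'
    constructor
    · rintro ⟨h1, h2⟩
      exact ⟨fun j hj => by rw [← Function.update_of_ne (Fin.ne_of_lt hj) c y, h1 j hj], h2⟩
    · rintro ⟨h1, h2⟩
      exact ⟨fun j hj => by rw [Function.update_of_ne (Fin.ne_of_lt hj) c y, h1 j hj], h2⟩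
  have hnum : ∀ c : β, pr p (fun x' y' => (∀ j, j < i → y' j = Function.update y i c j) ∧
      y' i = Function.update y i c i ∧
      ∀ j : Fin n, (j : ℕ) + 1 ≤ (i : ℕ) → x' j = x j)
      = pr p (fun x' y' => ((∀ j, j < i → y' j = y j) ∧
          (∀ j : Fin n, (j : ℕ) + 1 ≤ (i : ℕ) → x' j = x j)) ∧ y' i = c) := by
    intro c; apply pr_congr; intro x' y'
    rw [Function.update_self]
    constructor
    · rintro ⟨h1, h2, h3⟩
      exact ⟨⟨fun j hj => by rw [← Function.update_of_ne (Fin.ne_of_lt hj) c y, h1 j hj], h3⟩, h2⟩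
    · rintro ⟨⟨h1, h3⟩, h2⟩
      exact ⟨fun j hj => by rw [Function.update_of_ne (Fin.ne_of_lt hj) c y, h1 j hj], h2, h3⟩
  unfold condY
  calc ∑ c : β, _ = (∑ c : β, pr p (fun x' y' => ((∀ j, j < i → y' j = y j) ∧
          (∀ j : Fin n, (j : ℕ) + 1 ≤ (i : ℕ) → x' j = x j)) ∧ y' i = c)) /
        pr p (fun x' y' => (∀ j, j < i → y' j = y j) ∧
          ∀ j : Fin n, (j : ℕ) + 1 ≤ (i : ℕ) → x' j = x j) := by
        rw [Finset.sum_div]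
        apply Finset.sum_congr rfl; intro c _
        rw [hden c, hnum c]
    _ ≤ 1 := by
        rw [pr_partition]
        exact div_self_le_one _

lemma condY_congr (i : Fin n) {x x' : Fin n → α} {y y' : Fin n → β}
    (hx : ∀ j : Fin n, (j : ℕ) < (i : ℕ) → x j = x' j)
    (hy : ∀ j : Fin n, (j : ℕ) ≤ (i : ℕ) → y j = y' j) :
    condY p 1 i x y = condY p 1 i x' y' := by
  unfold condY
  congr 1
  · apply pr_congr; intro a b
    constructor
    · rintro ⟨h1, h2, h3⟩
      refine ⟨fun j hj => by rw [h1 j hj, hy j (le_of_lt hj)], by rw [h2, hy i le_rfl],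
        fun j hj => by rw [h3 j hj, hx j (by omega)]⟩
    · rintro ⟨h1, h2, h3⟩
      refine ⟨fun j hj => by rw [h1 j hj, ← hy j (le_of_lt hj)], by rw [h2, ← hy i le_rfl],
        fun j hj => by rw [h3 j hj, ← hx j (by omega)]⟩
  · apply pr_congr; intro a b
    constructor
    · rintro ⟨h1, h3⟩
      refine ⟨fun j hj => by rw [h1 j hj, hy j (le_of_lt hj)],
        fun j hj => by rw [h3 j hj, hx j (by omega)]⟩
    · rintro ⟨h1, h3⟩
      refine ⟨fun j hj => by rw [h1 j hj, ← hy j (le_of_lt hj)],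
        fun j hj => by rw [h3 j hj, ← hx j (by omega)]⟩

end condlems

section chain
variable {n : ℕ} {p : (Fin n → α) → (Fin n → β) → ℝ}

lemma teleprod (f : ℕ → ℝ) (N : ℕ) (h : ∀ t, t ≤ N → f t ≠ 0) :
    ∏ t ∈ Finset.range N, (f (t + 1) / f t) = f N / f 0 := by
  induction N with
  | zero => simp [div_self (h 0 le_rfl)]
  | succ N ih =>
    rw [Finset.prod_range_succ, ih (fun t ht => h t (by omega))]
    rw [div_mul_div_comm, mul_comm (f N) (f (N + 1))]
    exact mul_div_mul_right _ _ (h N (by omega))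

lemma pr_fst (x : Fin n → α) : pr p (fun x' _ => x' = x) = pX p x := by
  unfold pr pX
  rw [Finset.sum_eq_single x]
  · simp
  · intro x' _ hx'; apply Finset.sum_eq_zero; intro y' _; simp [hx']
  · simp

lemma chainX (hp : IsPmf p) {x : Fin n → α} {y : Fin n → β} (h : 0 < p x y) :
    ccX p n x y = pX p x := by
  set A : ℕ → ℝ := fun t => pr p (fun x' _ => ∀ j : Fin n, (j : ℕ) < t → x' j = x j) with hA
  have hApos : ∀ t, 0 < A t := fun t =>
    lt_of_lt_of_le h (le_pr hp.1 (fun j _ => rfl))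
  have hstep : ∀ i : Fin n, condX p n i x y = A ((i : ℕ) + 1) / A (i : ℕ) := by
    intro i
    unfold condX
    congr 1
    · apply pr_congr; intro a b
      constructor
      · rintro ⟨h1, h2, _⟩ j hj
        rcases Nat.lt_succ_iff_lt_or_eq.mp hj with hj' | hj'
        · exact h1 j hj'
        · rw [show j = i from Fin.ext hj']; exact h2
      · intro h1
        exact ⟨fun j hj => h1 j (by omega), h1 i (by omega),
          fun j hj => absurd hj (by have := i.isLt; omega)⟩
    · apply pr_congr; intro a b
      constructor
      · rintro ⟨h1, _⟩ j hj; exact h1 j hj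
      · intro h1
        exact ⟨fun j hj => h1 j hj, fun j hj => absurd hj (by have := i.isLt; omega)⟩
  have hAn : A n = pX p x := by
    have h1 : A n = pr p (fun x' (_ : Fin n → β) => x' = x) :=
      pr_congr (fun x' y' => ⟨fun h1 => funext fun j => h1 j j.isLt, fun h1 j _ => by rw [h1]⟩)
    rw [h1, pr_fst]
  have hA0 : A 0 = 1 := by
    have h1 : A 0 = pr p (fun _ _ => True) :=
      pr_congr (fun x' y' => ⟨fun _ => trivial, fun _ j hj => absurd hj (by omega)⟩)
    rw [h1, pr_true hp]
  unfold ccX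
  calc (∏ i : Fin n, condX p n i x y) = ∏ i : Fin n, A ((i : ℕ) + 1) / A (i : ℕ) :=
        Finset.prod_congr rfl (fun i _ => hstep i)
    _ = ∏ t ∈ Finset.range n, A (t + 1) / A t :=
        Fin.prod_univ_eq_prod_range (fun t => A (t + 1) / A t) n
    _ = A n / A 0 := teleprod A n (fun t _ => (hApos t).ne')
    _ = pX p x := by rw [hAn, hA0, div_one]

lemma chainXY (hp : IsPmf p) {x : Fin n → α} {y : Fin n → β} (h : 0 < p x y) :
    ccX p 0 x y * ccY p 1 x y = p x y := by
  set B : ℕ → ℝ := fun t => pr p (fun x' y' => (∀ j : Fin n, (j : ℕ) < t → x' j = x j) ∧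
    (∀ j : Fin n, (j : ℕ) < t → y' j = y j)) with hB
  set M : Fin n → ℝ := fun i => pr p (fun x' y' => (∀ j : Fin n, (j : ℕ) < (i : ℕ) → x' j = x j) ∧
    (∀ j : Fin n, (j : ℕ) < (i : ℕ) + 1 → y' j = y j)) with hM
  have hBpos : ∀ t, 0 < B t := fun t =>
    lt_of_lt_of_le h (le_pr hp.1 ⟨fun j _ => rfl, fun j _ => rfl⟩)
  have hMpos : ∀ i, 0 < M i := fun i =>
    lt_of_lt_of_le h (le_pr hp.1 ⟨fun j _ => rfl, fun j _ => rfl⟩)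
  have hstepX : ∀ i : Fin n, condX p 0 i x y = B ((i : ℕ) + 1) / M i := by
    intro i
    unfold condX
    congr 1
    · apply pr_congr; intro a b
      constructor
      · rintro ⟨h1, h2, h3⟩
        refine ⟨fun j hj => ?_, fun j hj => h3 j (by omega)⟩
        rcases Nat.lt_succ_iff_lt_or_eq.mp hj with hj' | hj'
        · exact h1 j hj'
        · rw [show j = i from Fin.ext hj']; exact h2
      · rintro ⟨h1, h2⟩
        exact ⟨fun j hj => h1 j (by omega), h1 i (by omega), fun j hj => h2 j (by omega)⟩
    · apply pr_congr; intro a b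
      constructor
      · rintro ⟨h1, h2⟩
        exact ⟨fun j hj => h1 j hj, fun j hj => h2 j (by omega)⟩
      · rintro ⟨h1, h2⟩
        exact ⟨fun j hj => h1 j hj, fun j hj => h2 j (by omega)⟩
  have hstepY : ∀ i : Fin n, condY p 1 i x y = M i / B (i : ℕ) := by
    intro i
    unfold condY
    congr 1
    · apply pr_congr; intro a b
      constructor
      · rintro ⟨h1, h2, h3⟩
        refine ⟨fun j hj => h3 j (by omega), fun j hj => ?_⟩
        rcases Nat.lt_succ_iff_lt_or_eq.mp hj with hj' | hj'
        · exact h1 j hj'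
        · rw [show j = i from Fin.ext hj']; exact h2
      · rintro ⟨h1, h2⟩
        exact ⟨fun j hj => h2 j (by omega), h2 i (by omega), fun j hj => h1 j (by omega)⟩
    · apply pr_congr; intro a b
      constructor
      · rintro ⟨h1, h2⟩
        exact ⟨fun j hj => h2 j (by omega), fun j hj => h1 j hj⟩
      · rintro ⟨h1, h2⟩
        exact ⟨fun j hj => h2 j hj, fun j hj => h1 j (by omega)⟩
  have hBn : B n = p x y := by
    have h1 : B n = pr p (fun x' y' => x' = x ∧ y' = y) :=
      pr_congr (fun x' y' => ⟨fun h1 => ⟨funext fun j => h1.1 j j.isLt,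
        funext fun j => h1.2 j j.isLt⟩,
        fun h1 => ⟨fun j _ => by rw [h1.1], fun j _ => by rw [h1.2]⟩⟩)
    rw [h1, pr_single]
  have hB0 : B 0 = 1 := by
    have h1 : B 0 = pr p (fun _ _ => True) :=
      pr_congr (fun x' y' => ⟨fun _ => trivial,
        fun _ => ⟨fun j hj => absurd hj (by omega), fun j hj => absurd hj (by omega)⟩⟩)
    rw [h1, pr_true hp]
  unfold ccX ccY
  calc (∏ i : Fin n, condX p 0 i x y) * ∏ i : Fin n, condY p 1 i x y
      = ∏ i : Fin n, (condX p 0 i x y * condY p 1 i x y) := (Finset.prod_mul_distrib).symm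
    _ = ∏ i : Fin n, B ((i : ℕ) + 1) / B (i : ℕ) := by
        apply Finset.prod_congr rfl; intro i _
        rw [hstepX i, hstepY i, div_mul_div_comm, mul_comm (M i) (B (i : ℕ))]
        exact mul_div_mul_right _ _ (hMpos i).ne'
    _ = ∏ t ∈ Finset.range n, B (t + 1) / B t :=
        Fin.prod_univ_eq_prod_range (fun t => B (t + 1) / B t) n
    _ = B n / B 0 := teleprod B n (fun t _ => (hBpos t).ne')
    _ = p x y := by rw [hBn, hB0, div_one]

lemma ccY_pos (hp : IsPmf p) {x : Fin n → α} {y : Fin n → β} (h : 0 < p x y) :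
    0 < ccY p 1 x y :=
  Finset.prod_pos (fun i _ => condY_pos hp.1 h)

lemma pX_pos (hp : IsPmf p) {x : Fin n → α} {y : Fin n → β} (h : 0 < p x y) : 0 < pX p x :=
  lt_of_lt_of_le h (Finset.single_le_sum (fun y' _ => hp.1 x y') (Finset.mem_univ y))

lemma dirYX_eq (hp : IsPmf p) :
    dirYX p = ∑ x, ∑ y, p x y * Real.logb 2 (p x y / (ccY p 1 x y * pX p x)) := by
  unfold dirYX cmiYX
  rw [Finset.sum_comm]
  apply Finset.sum_congr rfl; intro x _
  rw [Finset.sum_comm]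
  apply Finset.sum_congr rfl; intro y _
  rcases lt_or_eq_of_le (hp.1 x y) with hpos | hzero
  · have hr : ∀ i : Fin n, 0 < condX p 0 i x y / condX p n i x y :=
      fun i => div_pos (condX_pos hp.1 hpos) (condX_pos hp.1 hpos)
    rw [← Finset.mul_sum]
    congr 1
    rw [← Real.logb_prod _ _ (fun i _ => (hr i).ne')]
    congr 1
    rw [Finset.prod_div_distrib]
    have h1 : (∏ i : Fin n, condX p 0 i x y) = ccX p 0 x y := rfl
    have h2 : (∏ i : Fin n, condX p n i x y) = ccX p n x y := rfl
    rw [h1, h2, chainX hp hpos]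
    have h3 : ccX p 0 x y = p x y / ccY p 1 x y := by
      rw [eq_div_iff (ccY_pos hp hpos).ne']
      exact chainXY hp hpos
    rw [h3, div_div]
  · simp [← hzero]

end chain

section parts
variable {n : ℕ}

lemma gibbs {ι : Type*} (s : Finset ι) (f a : ι → ℝ) (hf : ∀ i ∈ s, 0 < f i)
    (ha : ∀ i ∈ s, 0 < a i) :
    ∑ i ∈ s, f i * Real.log (a i / f i) ≤ (∑ i ∈ s, a i) - ∑ i ∈ s, f i := by
  rw [← Finset.sum_sub_distrib]
  apply Finset.sum_le_sum; intro i hi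
  have h1 : Real.log (a i / f i) ≤ a i / f i - 1 :=
    Real.log_le_sub_one_of_pos (div_pos (ha i hi) (hf i hi))
  calc f i * Real.log (a i / f i) ≤ f i * (a i / f i - 1) :=
        mul_le_mul_of_nonneg_left h1 (le_of_lt (hf i hi))
    _ = a i - f i := by
        rw [mul_sub, mul_one, mul_comm (f i), div_mul_cancel₀ _ (hf i hi).ne']

/-- partial product of `g j` over indices `j < t`. -/
def partProd (g : Fin n → ℝ) (t : ℕ) : ℝ := ∏ j : Fin n, if (j : ℕ) < t then g j else 1

lemma partProd_zero (g : Fin n → ℝ) : partProd g 0 = 1 := by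
  unfold partProd
  apply Finset.prod_eq_one; intro j _; exact if_neg (by omega)

lemma partProd_top (g : Fin n → ℝ) : partProd g n = ∏ j, g j := by
  unfold partProd
  apply Finset.prod_congr rfl; intro j _; simp [j.isLt]

lemma partProd_succ (g : Fin n → ℝ) {t : ℕ} (ht : t < n) :
    partProd g (t + 1) = g ⟨t, ht⟩ * partProd g t := by
  unfold partProd
  have key : ∀ j : Fin n, (if (j : ℕ) < t + 1 then g j else 1)
      = (if j = ⟨t, ht⟩ then g j else 1) * (if (j : ℕ) < t then g j else 1) := by
    intro j
    by_cases h1 : j = ⟨t, ht⟩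
    · subst h1; simp
    · have h2 : (j : ℕ) ≠ t := fun hc => h1 (Fin.ext hc)
      by_cases h3 : (j : ℕ) < t
      · rw [if_pos (by omega), if_neg h1, if_pos h3, one_mul]
      · rw [if_neg (by omega), if_neg h1, if_neg h3, one_mul]
  rw [Finset.prod_congr rfl (fun j _ => key j), Finset.prod_mul_distrib,
    Finset.prod_ite_eq' Finset.univ (⟨t, ht⟩ : Fin n) g]
  simp

lemma partProd_nonneg {g : Fin n → ℝ} (hg : ∀ j, 0 ≤ g j) (t : ℕ) : 0 ≤ partProd g t :=
  Finset.prod_nonneg (fun j _ => by split; exacts [hg j, zero_le_one])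

lemma partProd_pos {g : Fin n → ℝ} (hg : ∀ j, 0 < g j) (t : ℕ) : 0 < partProd g t :=
  Finset.prod_pos (fun j _ => by split; exacts [hg j, one_pos])

end parts

section ccybound
variable {n : ℕ} {p : (Fin n → α) → (Fin n → β) → ℝ}

lemma partProd_condY_update {x : Fin n → α} {y : Fin n → β} {t : ℕ} {i : Fin n}
    (hti : t ≤ (i : ℕ)) (c : β) :
    partProd (fun j => condY p 1 j x (Function.update y i c)) t
      = partProd (fun j => condY p 1 j x y) t := by
  unfold partProd
  apply Finset.prod_congr rfl; intro j _
  split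
  · rename_i hj
    apply condY_congr j (fun _ _ => rfl)
    intro j' hj'
    refine Function.update_of_ne (fun hc => ?_) c y
    have h5 : (j' : ℕ) = (i : ℕ) := congrArg Fin.val hc
    omega
  · rfl

lemma sum_partProd_condY_le (hp : IsPmf p) (x : Fin n → α) :
    ∀ t, t ≤ n → ∑ y, partProd (fun j => condY p 1 j x y) t
      ≤ (Fintype.card β : ℝ) ^ (n - t) := by
  intro t
  induction t with
  | zero =>
    intro _
    simp only [partProd_zero]
    rw [Finset.sum_const, nsmul_eq_mul, mul_one, Nat.sub_zero, Finset.card_univ]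
    have hcf : Fintype.card (Fin n → β) = Fintype.card β ^ n := by
      rw [Fintype.card_fun, Fintype.card_fin]
    rw [hcf]
    push_cast
    exact le_refl _
  | succ t ih =>
    intro ht
    have htn : t < n := by omega
    have ihh := ih (by omega)
    set i : Fin n := ⟨t, htn⟩ with hidef
    have hstep : ∀ y, partProd (fun j => condY p 1 j x y) (t + 1)
        = partProd (fun j => condY p 1 j x y) t * condY p 1 i x y := by
      intro y
      rw [partProd_succ _ htn, mul_comm]
    rcases isEmpty_or_nonempty β with hβ | hβ
    · have : IsEmpty (Fin n → β) := by
        refine ⟨fun y => ?_⟩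
        exact hβ.elim (y ⟨t, htn⟩)
      rw [Finset.univ_eq_empty, Finset.sum_empty]
      positivity
    · have hcard : (0 : ℝ) < (Fintype.card β : ℝ) := by
        have := Fintype.card_pos_iff.mpr hβ
        exact_mod_cast this
      have hgrp : (Fintype.card β : ℝ) *
          ∑ y, partProd (fun j => condY p 1 j x y) t * condY p 1 i x y
          ≤ ∑ y, partProd (fun j => condY p 1 j x y) t := by
        apply update_group_le i
        · intro y; exact partProd_nonneg (fun j => condY_nonneg hp.1 1 j x y) t
        · intro y c; exact partProd_condY_update (le_refl t) c
        · intro y; exact condY_nonneg hp.1 1 i x y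
        · intro y; exact condY_update_sum hp.1 i x y
      have h2 : (Fintype.card β : ℝ) * ∑ y, partProd (fun j => condY p 1 j x y) (t + 1)
          ≤ (Fintype.card β : ℝ) ^ (n - t) := by
        calc (Fintype.card β : ℝ) * ∑ y, partProd (fun j => condY p 1 j x y) (t + 1)
            = (Fintype.card β : ℝ) *
              ∑ y, partProd (fun j => condY p 1 j x y) t * condY p 1 i x y := by
              congr 1; exact Finset.sum_congr rfl (fun y _ => hstep y)
          _ ≤ ∑ y, partProd (fun j => condY p 1 j x y) t := hgrp
          _ ≤ _ := ihh
      have h3 : (Fintype.card β : ℝ) ^ (n - t)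
          = (Fintype.card β : ℝ) * (Fintype.card β : ℝ) ^ (n - (t + 1)) := by
        rw [← pow_succ']
        congr 1
        omega
      rw [h3] at h2
      exact le_of_mul_le_mul_left h2 hcard

lemma ccY_sum_le (hp : IsPmf p) (x : Fin n → α) : ∑ y, ccY p 1 x y ≤ 1 := by
  have h := sum_partProd_condY_le hp x n le_rfl
  simp only [Nat.sub_self, pow_zero] at h
  calc ∑ y, ccY p 1 x y = ∑ y, partProd (fun j => condY p 1 j x y) n := by
        apply Finset.sum_congr rfl; intro y _
        rw [partProd_top]; rfl
    _ ≤ 1 := h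

end ccybound

section supp
variable {n : ℕ} {p : (Fin n → α) → (Fin n → β) → ℝ}

/-- Support of `p` as a finset of pairs. -/
def suppF (p : (Fin n → α) → (Fin n → β) → ℝ) : Finset ((Fin n → α) × (Fin n → β)) :=
  Finset.univ.filter (fun z => 0 < p z.1 z.2)

lemma mem_suppF {z : (Fin n → α) × (Fin n → β)} : z ∈ suppF p ↔ 0 < p z.1 z.2 := by
  simp [suppF]

lemma sum_suppF_eq (hp0 : ∀ x y, 0 ≤ p x y) (f : (Fin n → α) → (Fin n → β) → ℝ)
    (hf : ∀ x y, p x y = 0 → f x y = 0) :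
    ∑ z ∈ suppF p, f z.1 z.2 = ∑ x, ∑ y, f x y := by
  rw [← Fintype.sum_prod_type' (f := fun x y => f x y)]
  apply Finset.sum_subset (Finset.filter_subset _ _)
  intro z _ hz
  simp only [suppF, Finset.mem_filter, Finset.mem_univ, true_and, not_lt] at hz
  exact hf z.1 z.2 (le_antisymm hz (hp0 z.1 z.2))

lemma sum_suppF_p (hp : IsPmf p) : ∑ z ∈ suppF p, p z.1 z.2 = 1 := by
  rw [sum_suppF_eq hp.1 p (fun _ _ h => h)]
  exact hp.2

lemma sum_suppF_le (f : (Fin n → α) → (Fin n → β) → ℝ) (hf : ∀ x y, 0 ≤ f x y) :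
    ∑ z ∈ suppF p, f z.1 z.2 ≤ ∑ x, ∑ y, f x y := by
  rw [← Fintype.sum_prod_type' (f := fun x y => f x y)]
  apply Finset.sum_le_sum_of_subset_of_nonneg (Finset.filter_subset _ _)
  intro z _ _
  exact hf z.1 z.2

/-- Key reduction: a sum of `p * logb 2 (a/p)` over the support is nonpositive
provided the total mass of `a` is at most `1`. -/
lemma sum_logb_ratio_nonpos (hp : IsPmf p) (a : (Fin n → α) → (Fin n → β) → ℝ)
    (hapos : ∀ x y, 0 < p x y → 0 < a x y)
    (hasum : ∑ z ∈ suppF p, a z.1 z.2 ≤ 1) :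
    ∑ z ∈ suppF p, p z.1 z.2 * Real.logb 2 (a z.1 z.2 / p z.1 z.2) ≤ 0 := by
  have hlog2 : 0 < Real.log 2 := Real.log_pos one_lt_two
  have hgibbs := gibbs (suppF p) (fun z => p z.1 z.2) (fun z => a z.1 z.2)
    (fun z hz => mem_suppF.mp hz) (fun z hz => hapos z.1 z.2 (mem_suppF.mp hz))
  rw [sum_suppF_p hp] at hgibbs
  have h1 : ∑ z ∈ suppF p, p z.1 z.2 * Real.logb 2 (a z.1 z.2 / p z.1 z.2)
      = (∑ z ∈ suppF p, p z.1 z.2 * Real.log (a z.1 z.2 / p z.1 z.2)) / Real.log 2 := by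
    rw [Finset.sum_div]
    apply Finset.sum_congr rfl; intro z _
    rw [Real.logb]
    ring
  rw [h1]
  apply div_nonpos_of_nonpos_of_nonneg _ (le_of_lt hlog2)
  calc ∑ z ∈ suppF p, p z.1 z.2 * Real.log (a z.1 z.2 / p z.1 z.2)
      ≤ (∑ z ∈ suppF p, a z.1 z.2) - 1 := hgibbs
    _ ≤ 0 := by linarith

lemma dirYX_nonneg (hp : IsPmf p) : 0 ≤ dirYX p := by
  rw [dirYX_eq hp]
  have hkey : ∑ x, ∑ y, p x y * Real.logb 2 (p x y / (ccY p 1 x y * pX p x))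
      = ∑ z ∈ suppF p, p z.1 z.2 *
        Real.logb 2 (p z.1 z.2 / (ccY p 1 z.1 z.2 * pX p z.1)) :=
    (sum_suppF_eq hp.1 _ (fun x y h => by rw [h, zero_mul])).symm
  rw [hkey]
  have hterm : ∀ z ∈ suppF p, p z.1 z.2 *
      Real.logb 2 (p z.1 z.2 / (ccY p 1 z.1 z.2 * pX p z.1))
      = -(p z.1 z.2 * Real.logb 2 ((ccY p 1 z.1 z.2 * pX p z.1) / p z.1 z.2)) := by
    intro z _
    rw [← inv_div (ccY p 1 z.1 z.2 * pX p z.1) (p z.1 z.2), Real.logb, Real.log_inv, Real.logb]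
    ring
  rw [Finset.sum_congr rfl hterm, Finset.sum_neg_distrib, neg_nonneg]
  apply sum_logb_ratio_nonpos hp (fun x y => ccY p 1 x y * pX p x)
  · intro x y h
    exact mul_pos (ccY_pos hp h) (pX_pos hp h)
  · calc ∑ z ∈ suppF p, ccY p 1 z.1 z.2 * pX p z.1
        ≤ ∑ x, ∑ y, ccY p 1 x y * pX p x :=
          sum_suppF_le _ (fun x y => mul_nonneg
            (Finset.prod_nonneg fun j _ => condY_nonneg hp.1 1 j x y)
            (Finset.sum_nonneg fun y' _ => hp.1 x y'))
      _ = ∑ x, pX p x * ∑ y, ccY p 1 x y := by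
          apply Finset.sum_congr rfl; intro x _
          rw [Finset.mul_sum]
          apply Finset.sum_congr rfl; intro y _
          ring
      _ ≤ ∑ x, pX p x * 1 := by
          apply Finset.sum_le_sum; intro x _
          exact mul_le_mul_of_nonneg_left (ccY_sum_le hp x)
            (Finset.sum_nonneg fun y' _ => hp.1 x y')
      _ = 1 := by
          simp only [mul_one]
          exact hp.2

end supp

section hatconstruction
variable {n m : ℕ}

/-- Wealth factors of strategy `b`. -/
def wf (v : α → Fin m → ℝ) (b : Fin n → (Fin n → α) → (Fin n → β) → (Fin m → ℝ))
    (x : Fin n → α) (y : Fin n → β) : Fin n → ℝ :=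
  fun j => ∑ k, b j x y k * v (x j) k

/-- Joint weight: causally conditioned `y`-probability times wealth, both up to time `t`. -/
def wGt (p : (Fin n → α) → (Fin n → β) → ℝ) (v : α → Fin m → ℝ)
    (b : Fin n → (Fin n → α) → (Fin n → β) → (Fin m → ℝ))
    (x : Fin n → α) (t : ℕ) (y : Fin n → β) : ℝ :=
  partProd (fun j => condY p 1 j x y) t * partProd (wf v b x y) t

/-- Weight used to average the portfolio at time `i`. -/
def wSel (p : (Fin n → α) → (Fin n → β) → ℝ) (v : α → Fin m → ℝ)
    (b : Fin n → (Fin n → α) → (Fin n → β) → (Fin m → ℝ))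
    (i : Fin n) (x : Fin n → α) (y : Fin n → β) : ℝ :=
  partProd (fun j => condY p 1 j x y) ((i : ℕ) + 1) * partProd (wf v b x y) (i : ℕ)

def denB (p : (Fin n → α) → (Fin n → β) → ℝ) (v : α → Fin m → ℝ)
    (b : Fin n → (Fin n → α) → (Fin n → β) → (Fin m → ℝ)) (i : Fin n) (x : Fin n → α) : ℝ :=
  ∑ y, wSel p v b i x y

/-- The derived side-information-free portfolio. -/
def bhat (p : (Fin n → α) → (Fin n → β) → ℝ) (v : α → Fin m → ℝ)
    (b : Fin n → (Fin n → α) → (Fin n → β) → (Fin m → ℝ)) (y₀ : Fin n → β) :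
    Fin n → (Fin n → α) → (Fin n → β) → (Fin m → ℝ) :=
  fun i x _ k => if denB p v b i x = 0 then b i x y₀ k
    else (∑ y, wSel p v b i x y * b i x y k) / denB p v b i x

variable {p : (Fin n → α) → (Fin n → β) → ℝ} {v : α → Fin m → ℝ}
  {b : Fin n → (Fin n → α) → (Fin n → β) → (Fin m → ℝ)}

lemma wf_nonneg (hv : ∀ a k, 0 ≤ v a k) (hb0 : ∀ i x y k, 0 ≤ b i x y k) (x y j) :
    0 ≤ wf v b x y j :=
  Finset.sum_nonneg fun k _ => mul_nonneg (hb0 j x y k) (hv (x j) k)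

lemma prod_pos_factor (f : Fin n → ℝ) (hf : ∀ j, 0 ≤ f j) (h : 0 < ∏ j, f j) (j : Fin n) :
    0 < f j := by
  rcases lt_or_eq_of_le (hf j) with h1 | h1
  · exact h1
  · exfalso
    have hz : (∏ j, f j) = 0 := Finset.prod_eq_zero (Finset.mem_univ j) h1.symm
    rw [hz] at h
    exact lt_irrefl 0 h

lemma wSel_nonneg (hp0 : ∀ x y, 0 ≤ p x y) (hv : ∀ a k, 0 ≤ v a k)
    (hb0 : ∀ i x y k, 0 ≤ b i x y k) (i x y) : 0 ≤ wSel p v b i x y :=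
  mul_nonneg (partProd_nonneg (fun j => condY_nonneg hp0 1 j x y) _)
    (partProd_nonneg (wf_nonneg hv hb0 x y) _)

lemma wGt_nonneg (hp0 : ∀ x y, 0 ≤ p x y) (hv : ∀ a k, 0 ≤ v a k)
    (hb0 : ∀ i x y k, 0 ≤ b i x y k) (x t y) : 0 ≤ wGt p v b x t y :=
  mul_nonneg (partProd_nonneg (fun j => condY_nonneg hp0 1 j x y) _)
    (partProd_nonneg (wf_nonneg hv hb0 x y) _)

lemma wSel_mul_wf (i : Fin n) (x y) :
    wSel p v b i x y * wf v b x y i = wGt p v b x ((i : ℕ) + 1) y := by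
  unfold wSel wGt
  rw [partProd_succ (wf v b x y) i.isLt, Fin.eta]
  ring

lemma wSel_eq_condY_mul (i : Fin n) (x y) :
    wSel p v b i x y = condY p 1 i x y * wGt p v b x (i : ℕ) y := by
  unfold wSel wGt
  rw [partProd_succ (fun j => condY p 1 j x y) i.isLt, Fin.eta]
  ring

lemma wGt_update (hb : IsCausalPortfolio b) (x : Fin n → α) (i : Fin n) (y c) :
    wGt p v b x (i : ℕ) (Function.update y i c) = wGt p v b x (i : ℕ) y := by
  unfold wGt
  congr 1
  · exact partProd_condY_update le_rfl c
  · unfold partProd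
    apply Finset.prod_congr rfl; intro j _
    split
    · rename_i hj
      unfold wf
      have hby : b j x (Function.update y i c) = b j x y := by
        apply hb.2.2 j x x (Function.update y i c) y (fun _ _ => rfl)
        intro j' hj'
        apply Function.update_of_ne
        intro hc
        have h5 : (j' : ℕ) = (i : ℕ) := congrArg Fin.val hc
        have h6 : (j' : ℕ) ≤ (j : ℕ) := hj'
        omega
      rw [hby]
    · rfl

lemma wSel_xcongr (hb : IsCausalPortfolio b) {i : Fin n} {x x' : Fin n → α}
    (hagree : ∀ j : Fin n, j < i → x j = x' j) (y) :
    wSel p v b i x y = wSel p v b i x' y := by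
  unfold wSel
  congr 1
  · unfold partProd
    apply Finset.prod_congr rfl; intro j _
    split
    · rename_i hj
      exact condY_congr j (fun j' hj' => hagree j' (by omega)) (fun _ _ => rfl)
    · rfl
  · unfold partProd
    apply Finset.prod_congr rfl; intro j _
    split
    · rename_i hj
      unfold wf
      have hby : b j x y = b j x' y :=
        hb.2.2 j x x' y y (fun j' hj' => hagree j' (by
          have : (j' : ℕ) < (j : ℕ) := hj'
          have : (j : ℕ) < (i : ℕ) := hj
          omega)) (fun _ _ => rfl)
      have hxj : x j = x' j := hagree j hj
      rw [hby, hxj]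
    · rfl

lemma denB_xcongr (hb : IsCausalPortfolio b) {i : Fin n} {x x' : Fin n → α}
    (hagree : ∀ j : Fin n, j < i → x j = x' j) :
    denB p v b i x = denB p v b i x' :=
  Finset.sum_congr rfl fun y _ => wSel_xcongr hb hagree y

lemma bhat_const_y (y₀ : Fin n → β) (i x y y') :
    bhat p v b y₀ i x y = bhat p v b y₀ i x y' := rfl

lemma bhat_nonneg (hp0 : ∀ x y, 0 ≤ p x y) (hv : ∀ a k, 0 ≤ v a k)
    (hb0 : ∀ i x y k, 0 ≤ b i x y k) (y₀ i x y k) : 0 ≤ bhat p v b y₀ i x y k := by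
  unfold bhat
  split
  · exact hb0 i x y₀ k
  · rename_i hden
    apply div_nonneg
    · exact Finset.sum_nonneg fun y' _ =>
        mul_nonneg (wSel_nonneg hp0 hv hb0 i x y') (hb0 i x y' k)
    · exact Finset.sum_nonneg fun y' _ => wSel_nonneg hp0 hv hb0 i x y'

lemma bhat_causal (hp0 : ∀ x y, 0 ≤ p x y) (hv : ∀ a k, 0 ≤ v a k)
    (hb : IsCausalPortfolio b) (y₀ : Fin n → β) :
    IsCausalPortfolio (bhat p v b y₀) := by
  refine ⟨fun i x y k => bhat_nonneg hp0 hv hb.1 y₀ i x y k, ?_, ?_⟩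
  · intro i x y
    unfold bhat
    split
    · exact hb.2.1 i x y₀
    · rename_i hden
      rw [← Finset.sum_div]
      rw [Finset.sum_comm]
      have h1 : ∑ y', ∑ k, wSel p v b i x y' * b i x y' k = denB p v b i x := by
        unfold denB
        apply Finset.sum_congr rfl; intro y' _
        rw [← Finset.mul_sum, hb.2.1 i x y', mul_one]
      rw [h1, div_self hden]
  · intro i x x' y y' hxa hya
    funext k
    unfold bhat
    rw [denB_xcongr hb (fun j hj => hxa j hj)]
    split
    · exact congrFun (hb.2.2 i x x' y₀ y₀ hxa (fun _ _ => rfl)) k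
    · congr 1
      apply Finset.sum_congr rfl; intro y'' _
      rw [wSel_xcongr hb hxa y'', hb.2.2 i x x' y'' y'' hxa (fun _ _ => rfl)]

lemma bhat_wf (hden : denB p v b i x ≠ 0) (y₀ : Fin n → β) (y : Fin n → β) :
    wf v (bhat p v b y₀) x y i = (∑ y', wGt p v b x ((i : ℕ) + 1) y') / denB p v b i x := by
  unfold wf bhat
  simp only [if_neg hden]
  have h1 : ∀ k : Fin m, (∑ y', wSel p v b i x y' * b i x y' k) / denB p v b i x * v (x i) k
      = (∑ y', wSel p v b i x y' * b i x y' k * v (x i) k) / denB p v b i x := by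
    intro k; rw [div_mul_eq_mul_div, Finset.sum_mul]
  rw [Finset.sum_congr rfl (fun k _ => h1 k), ← Finset.sum_div]
  congr 1
  rw [Finset.sum_comm]
  apply Finset.sum_congr rfl; intro y' _
  rw [← wSel_mul_wf i x y']
  unfold wf
  rw [Finset.mul_sum]
  apply Finset.sum_congr rfl; intro k _
  ring

lemma key_ineq (hp : IsPmf p) (hv : ∀ a k, 0 ≤ v a k) (hb : IsCausalPortfolio b)
    (y₀ : Fin n → β) (x : Fin n → α) :
    ∀ t, t ≤ n → ∑ y, wGt p v b x t y
      ≤ (Fintype.card β : ℝ) ^ (n - t) * partProd (wf v (bhat p v b y₀) x y₀) t := by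
  intro t
  induction t with
  | zero =>
    intro _
    unfold wGt
    simp only [partProd_zero, mul_one, Nat.sub_zero]
    rw [Finset.sum_const, nsmul_eq_mul, mul_one, Finset.card_univ]
    have hcf : Fintype.card (Fin n → β) = Fintype.card β ^ n := by
      rw [Fintype.card_fun, Fintype.card_fin]
    rw [hcf]
    push_cast
    exact le_refl _
  | succ t ih =>
    intro ht
    have htn : t < n := by omega
    have ihh := ih (by omega)
    set i : Fin n := ⟨t, htn⟩ with hidef
    have hβ : Nonempty β := ⟨y₀ i⟩
    have hcard : (0 : ℝ) < (Fintype.card β : ℝ) := by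
      have := Fintype.card_pos_iff.mpr hβ
      exact_mod_cast this
    have hti : (i : ℕ) = t := rfl
    have hstep : ∀ y, wGt p v b x (t + 1) y = wSel p v b i x y * wf v b x y i := by
      intro y
      rw [wSel_mul_wf i x y, hti]
    have hbhat_nonneg : 0 ≤ partProd (wf v (bhat p v b y₀) x y₀) (t + 1) :=
      partProd_nonneg (wf_nonneg hv (fun i' x' y' k => bhat_nonneg hp.1 hv hb.1 y₀ i' x' y' k) x y₀) _
    by_cases hden : denB p v b i x = 0
    · have hz : ∀ y, wSel p v b i x y = 0 := by
        have h0 := (Finset.sum_eq_zero_iff_of_nonneg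
          (fun y _ => wSel_nonneg hp.1 hv hb.1 i x y)).mp hden
        exact fun y => h0 y (Finset.mem_univ y)
      have hz2 : ∑ y, wGt p v b x (t + 1) y = 0 := by
        apply Finset.sum_eq_zero; intro y _
        rw [hstep y, hz y, zero_mul]
      rw [hz2]
      positivity
    · have hdpos : 0 < denB p v b i x :=
        lt_of_le_of_ne (Finset.sum_nonneg fun y _ => wSel_nonneg hp.1 hv hb.1 i x y)
          (Ne.symm hden)
      have hsum_eq : ∑ y, wGt p v b x (t + 1) y
          = wf v (bhat p v b y₀) x y₀ i * denB p v b i x := by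
        rw [bhat_wf hden y₀ y₀, hti, div_mul_cancel₀ _ hden]
      have hgrp : (Fintype.card β : ℝ) * denB p v b i x ≤ ∑ y, wGt p v b x t y := by
        have h1 : denB p v b i x = ∑ y, wGt p v b x t y * condY p 1 i x y := by
          unfold denB
          apply Finset.sum_congr rfl; intro y _
          rw [wSel_eq_condY_mul i x y, hti]
          ring
        rw [h1]
        apply update_group_le i
        · intro y; exact wGt_nonneg hp.1 hv hb.1 x t y
        · intro y c
          have := wGt_update (p := p) (v := v) hb x i y c
          rw [hti] at this
          exact this
        · intro y; exact condY_nonneg hp.1 1 i x y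
        · intro y; exact condY_update_sum hp.1 i x y
      have hwfh : 0 ≤ wf v (bhat p v b y₀) x y₀ i :=
        wf_nonneg hv (fun i' x' y' k => bhat_nonneg hp.1 hv hb.1 y₀ i' x' y' k) x y₀ i
      calc ∑ y, wGt p v b x (t + 1) y
          = wf v (bhat p v b y₀) x y₀ i * denB p v b i x := hsum_eq
        _ ≤ wf v (bhat p v b y₀) x y₀ i * ((∑ y, wGt p v b x t y) / (Fintype.card β : ℝ)) := by
            apply mul_le_mul_of_nonneg_left _ hwfh
            rw [le_div_iff₀ hcard, mul_comm]
            exact hgrp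
        _ ≤ wf v (bhat p v b y₀) x y₀ i *
            (((Fintype.card β : ℝ) ^ (n - t) * partProd (wf v (bhat p v b y₀) x y₀) t)
              / (Fintype.card β : ℝ)) := by
            apply mul_le_mul_of_nonneg_left _ hwfh
            exact div_le_div_of_nonneg_right ihh hcard.le
        _ = (Fintype.card β : ℝ) ^ (n - (t + 1)) * partProd (wf v (bhat p v b y₀) x y₀) (t + 1) := by
            rw [partProd_succ _ htn, ← hidef]
            have hpow : (Fintype.card β : ℝ) ^ (n - t)
                = (Fintype.card β : ℝ) * (Fintype.card β : ℝ) ^ (n - (t + 1)) := by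
              rw [← pow_succ']
              congr 1
              omega
            rw [hpow]
            field_simp

end hatconstruction

section mainlemma
variable {n m : ℕ} {p : (Fin n → α) → (Fin n → β) → ℝ} {v : α → Fin m → ℝ}
  {b : Fin n → (Fin n → α) → (Fin n → β) → (Fin m → ℝ)}

lemma exists_hat (hp : IsPmf p) (hv : ∀ a k, 0 ≤ v a k) (hb : IsCausalPortfolio b)
    (hposS : ∀ x y, 0 < p x y → 0 < ∏ i, ∑ k, b i x y k * v (x i) k) :
    ∃ bh : Fin n → (Fin n → α) → (Fin n → β) → (Fin m → ℝ), IsCausalPortfolio bh ∧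
      (∀ i x y y', bh i x y = bh i x y') ∧
      (∀ x y, 0 < p x y → 0 < ∏ i, ∑ k, bh i x y k * v (x i) k) ∧
      stockW p v b ≤ dirYX p + stockW p v bh := by
  have hne : Nonempty (Fin n → β) := by
    by_contra hc
    rw [not_nonempty_iff] at hc
    have h2 := hp.2
    rw [Finset.sum_eq_zero (fun x _ => by rw [Finset.univ_eq_empty, Finset.sum_empty])] at h2
    exact one_ne_zero h2.symm
  obtain ⟨y₀⟩ := hne
  have hposbh : ∀ x y, 0 < p x y → 0 < ∏ i, ∑ k, bhat p v b y₀ i x y k * v (x i) k := by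
    intro x y hpxy
    have hprod : ∀ y', (∏ i, ∑ k, bhat p v b y₀ i x y' k * v (x i) k)
        = ∏ i, wf v (bhat p v b y₀) x y' i := fun y' => rfl
    rw [hprod]
    apply Finset.prod_pos
    intro i _
    have hwfb_pos : ∀ j, 0 < wf v b x y j :=
      prod_pos_factor (wf v b x y) (wf_nonneg hv hb.1 x y) (hposS x y hpxy)
    have hwSel_pos : 0 < wSel p v b i x y :=
      mul_pos (partProd_pos (fun j => condY_pos hp.1 hpxy) _)
        (partProd_pos hwfb_pos _)
    have hden_pos : 0 < denB p v b i x :=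
      lt_of_lt_of_le hwSel_pos (Finset.single_le_sum
        (fun y' _ => wSel_nonneg hp.1 hv hb.1 i x y') (Finset.mem_univ y))
    have hwGt_pos : 0 < wGt p v b x ((i : ℕ) + 1) y :=
      mul_pos (partProd_pos (fun j => condY_pos hp.1 hpxy) _)
        (partProd_pos hwfb_pos _)
    have hnum_pos : 0 < ∑ y', wGt p v b x ((i : ℕ) + 1) y' :=
      lt_of_lt_of_le hwGt_pos (Finset.single_le_sum
        (fun y' _ => wGt_nonneg hp.1 hv hb.1 x _ y') (Finset.mem_univ y))
    rw [bhat_wf (i := i) (x := x) hden_pos.ne' y₀ y]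
    exact div_pos hnum_pos hden_pos
  refine ⟨bhat p v b y₀, bhat_causal hp.1 hv hb y₀, fun i x y y' => rfl, hposbh, ?_⟩
  have hShc : ∀ x y, (∏ i, ∑ k, bhat p v b y₀ i x y k * v (x i) k)
      = ∏ i, ∑ k, bhat p v b y₀ i x y₀ k * v (x i) k := fun x y => rfl
  set a : (Fin n → α) → (Fin n → β) → ℝ := fun x y =>
    (∏ i, ∑ k, b i x y k * v (x i) k) * (ccY p 1 x y * pX p x)
      / (∏ i, ∑ k, bhat p v b y₀ i x y₀ k * v (x i) k) with ha
  suffices h : stockW p v b - stockW p v (bhat p v b y₀) - dirYX p ≤ 0 by linarith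
  have e1 : stockW p v b = ∑ z ∈ suppF p,
      p z.1 z.2 * Real.logb 2 (∏ i, ∑ k, b i z.1 z.2 k * v (z.1 i) k) := by
    unfold stockW
    exact (sum_suppF_eq hp.1 _ (fun x y h => by rw [h, zero_mul])).symm
  have e2 : stockW p v (bhat p v b y₀) = ∑ z ∈ suppF p,
      p z.1 z.2 * Real.logb 2 (∏ i, ∑ k, bhat p v b y₀ i z.1 z.2 k * v (z.1 i) k) := by
    unfold stockW
    exact (sum_suppF_eq hp.1 _ (fun x y h => by rw [h, zero_mul])).symm
  have e3 : dirYX p = ∑ z ∈ suppF p,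
      p z.1 z.2 * Real.logb 2 (p z.1 z.2 / (ccY p 1 z.1 z.2 * pX p z.1)) := by
    rw [dirYX_eq hp]
    exact (sum_suppF_eq hp.1 _ (fun x y h => by rw [h, zero_mul])).symm
  rw [e1, e2, e3, ← Finset.sum_sub_distrib, ← Finset.sum_sub_distrib]
  have hterm : ∀ z ∈ suppF p,
      p z.1 z.2 * Real.logb 2 (∏ i, ∑ k, b i z.1 z.2 k * v (z.1 i) k)
        - p z.1 z.2 * Real.logb 2 (∏ i, ∑ k, bhat p v b y₀ i z.1 z.2 k * v (z.1 i) k)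
        - p z.1 z.2 * Real.logb 2 (p z.1 z.2 / (ccY p 1 z.1 z.2 * pX p z.1))
      = p z.1 z.2 * Real.logb 2 (a z.1 z.2 / p z.1 z.2) := by
    rintro ⟨x, y⟩ hz
    have hpz : 0 < p x y := mem_suppF.mp hz
    have hS : 0 < ∏ i, ∑ k, b i x y k * v (x i) k := hposS x y hpz
    have hSh : 0 < ∏ i, ∑ k, bhat p v b y₀ i x y₀ k * v (x i) k := by
      have h0 := hposbh x y hpz
      rw [hShc x y] at h0
      exact h0
    have hcc : 0 < ccY p 1 x y * pX p x := mul_pos (ccY_pos hp hpz) (pX_pos hp hpz)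
    simp only []
    rw [hShc x y]
    have l1 : Real.logb 2 (a x y / p x y)
        = Real.logb 2 (∏ i, ∑ k, b i x y k * v (x i) k)
          + Real.logb 2 (ccY p 1 x y * pX p x)
          - Real.logb 2 (∏ i, ∑ k, bhat p v b y₀ i x y₀ k * v (x i) k)
          - Real.logb 2 (p x y) := by
      simp only [ha]
      rw [div_div]
      rw [Real.logb_div (mul_ne_zero hS.ne' hcc.ne')
        (mul_ne_zero hSh.ne' hpz.ne')]
      rw [Real.logb_mul hS.ne' hcc.ne', Real.logb_mul hSh.ne' hpz.ne']
      ring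
    have l2 : Real.logb 2 (p x y / (ccY p 1 x y * pX p x))
        = Real.logb 2 (p x y) - Real.logb 2 (ccY p 1 x y * pX p x) :=
      Real.logb_div hpz.ne' hcc.ne'
    rw [l1, l2]
    ring
  rw [Finset.sum_congr rfl hterm]
  apply sum_logb_ratio_nonpos hp a
  · intro x y hpz
    have hS : 0 < ∏ i, ∑ k, b i x y k * v (x i) k := hposS x y hpz
    have hSh : 0 < ∏ i, ∑ k, bhat p v b y₀ i x y₀ k * v (x i) k := by
      have h0 := hposbh x y hpz
      rw [hShc x y] at h0
      exact h0
    have hcc : 0 < ccY p 1 x y * pX p x := mul_pos (ccY_pos hp hpz) (pX_pos hp hpz)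
    simp only [ha]
    exact div_pos (mul_pos hS hcc) hSh
  · have hanonneg : ∀ x y, 0 ≤ a x y := by
      intro x y
      simp only [ha]
      apply div_nonneg
      · apply mul_nonneg
        · exact Finset.prod_nonneg fun i _ => wf_nonneg hv hb.1 x y i
        · exact mul_nonneg (Finset.prod_nonneg fun i _ => condY_nonneg hp.1 1 i x y)
            (Finset.sum_nonneg fun y' _ => hp.1 x y')
      · exact Finset.prod_nonneg fun i _ =>
          wf_nonneg hv (fun i' x' y' k => bhat_nonneg hp.1 hv hb.1 y₀ i' x' y' k) x y₀ i
    calc ∑ z ∈ suppF p, a z.1 z.2 ≤ ∑ x, ∑ y, a x y := sum_suppF_le a hanonneg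
      _ ≤ ∑ x, pX p x := by
          apply Finset.sum_le_sum
          intro x _
          have hKI : ∑ y, ccY p 1 x y * (∏ i, ∑ k, b i x y k * v (x i) k)
              ≤ ∏ i, ∑ k, bhat p v b y₀ i x y₀ k * v (x i) k := by
            have h := key_ineq hp hv hb y₀ x n le_rfl
            rw [Nat.sub_self, pow_zero, one_mul, partProd_top] at h
            calc ∑ y, ccY p 1 x y * (∏ i, ∑ k, b i x y k * v (x i) k)
                = ∑ y, wGt p v b x n y := by
                  apply Finset.sum_congr rfl; intro y _
                  unfold wGt
                  rw [partProd_top, partProd_top]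
                  rfl
              _ ≤ ∏ j, wf v (bhat p v b y₀) x y₀ j := h
              _ = ∏ i, ∑ k, bhat p v b y₀ i x y₀ k * v (x i) k := rfl
          have ha2 : ∀ y, a x y = ccY p 1 x y * (∏ i, ∑ k, b i x y k * v (x i) k) * pX p x
              / (∏ i, ∑ k, bhat p v b y₀ i x y₀ k * v (x i) k) := by
            intro y
            simp only [ha]
            rw [show (∏ i, ∑ k, b i x y k * v (x i) k) * (ccY p 1 x y * pX p x)
              = ccY p 1 x y * (∏ i, ∑ k, b i x y k * v (x i) k) * pX p x from by ring]
          rw [Finset.sum_congr rfl (fun y _ => ha2 y)]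
          rw [← Finset.sum_div, ← Finset.sum_mul]
          by_cases hSh0 : (∏ i, ∑ k, bhat p v b y₀ i x y₀ k * v (x i) k) = 0
          · rw [hSh0, div_zero]
            exact Finset.sum_nonneg fun y' _ => hp.1 x y'
          · have hShpos : 0 < ∏ i, ∑ k, bhat p v b y₀ i x y₀ k * v (x i) k :=
              lt_of_le_of_ne (Finset.prod_nonneg fun i _ =>
                wf_nonneg hv (fun i' x' y' k => bhat_nonneg hp.1 hv hb.1 y₀ i' x' y' k) x y₀ i)
                (Ne.symm hSh0)
            rw [div_le_iff₀ hShpos]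
            calc (∑ y, ccY p 1 x y * (∏ i, ∑ k, b i x y k * v (x i) k)) * pX p x
                ≤ (∏ i, ∑ k, bhat p v b y₀ i x y₀ k * v (x i) k) * pX p x :=
                  mul_le_mul_of_nonneg_right hKI (Finset.sum_nonneg fun y' _ => hp.1 x y')
              _ = pX p x * (∏ i, ∑ k, bhat p v b y₀ i x y₀ k * v (x i) k) := mul_comm _ _
      _ = 1 := hp.2

end mainlemma

end helpers

/-- the increase in optimal growth rate of a stock market due to causal
side information is upper bounded by the directed information:
`W*(X^n||Y^n) − W*(X^n) ≤ I(Y^n → X^n)`.  The suprema range over causal portfolio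
strategies (with, resp. without, side information) whose expected log-wealth terms
are finite, i.e. whose wealth is positive on the support of `p`. -/
theorem stock_market_growth_bound {n m : ℕ}
    (p : (Fin n → α) → (Fin n → β) → ℝ) (hp : IsPmf p)
    (v : α → Fin m → ℝ) (hv : ∀ a k, 0 ≤ v a k) :
    sSup {w | ∃ b, IsCausalPortfolio b ∧
        (∀ x y, 0 < p x y → 0 < ∏ i, ∑ k, b i x y k * v (x i) k) ∧
        w = stockW p v b} -
      sSup {w | ∃ b, IsCausalPortfolio b ∧ (∀ i x y y', b i x y = b i x y') ∧
        (∀ x y, 0 < p x y → 0 < ∏ i, ∑ k, b i x y k * v (x i) k) ∧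
        w = stockW p v b} ≤
    dirYX p := by
  set A : Set ℝ := {w | ∃ b, IsCausalPortfolio b ∧
      (∀ x y, 0 < p x y → 0 < ∏ i, ∑ k, b i x y k * v (x i) k) ∧
      w = stockW p v b} with hA
  set B : Set ℝ := {w | ∃ b, IsCausalPortfolio b ∧ (∀ i x y y', b i x y = b i x y') ∧
      (∀ x y, 0 < p x y → 0 < ∏ i, ∑ k, b i x y k * v (x i) k) ∧
      w = stockW p v b} with hB
  have hBA : B ⊆ A := by
    rintro w ⟨b, hb, hconst, hpos, rfl⟩
    exact ⟨b, hb, hpos, rfl⟩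
  have hAbdd : BddAbove A := by
    refine ⟨∑ x, ∑ y, p x y * Real.logb 2 (∏ i, (1 + ∑ k, v (x i) k)), ?_⟩
    rintro w ⟨b, hb, hpos, rfl⟩
    unfold stockW
    apply Finset.sum_le_sum; intro x _
    apply Finset.sum_le_sum; intro y _
    apply mul_le_mul_of_nonneg_left _ (hp.1 x y)
    have hC1 : ∀ i : Fin n, (1 : ℝ) ≤ 1 + ∑ k, v (x i) k := fun i =>
      le_add_of_nonneg_right (Finset.sum_nonneg fun k _ => hv (x i) k)
    have hfle : (∏ i, ∑ k, b i x y k * v (x i) k) ≤ ∏ i, (1 + ∑ k, v (x i) k) := by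
      apply Finset.prod_le_prod
      · intro i _
        exact Finset.sum_nonneg fun k _ => mul_nonneg (hb.1 i x y k) (hv (x i) k)
      · intro i _
        calc (∑ k, b i x y k * v (x i) k) ≤ ∑ k, v (x i) k := by
              apply Finset.sum_le_sum; intro k _
              have hbk1 : b i x y k ≤ 1 := by
                rw [← hb.2.1 i x y]
                exact Finset.single_le_sum (fun k' _ => hb.1 i x y k') (Finset.mem_univ k)
              calc b i x y k * v (x i) k ≤ 1 * v (x i) k :=
                    mul_le_mul_of_nonneg_right hbk1 (hv (x i) k)
                _ = v (x i) k := one_mul _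
          _ ≤ 1 + ∑ k, v (x i) k := le_add_of_nonneg_left zero_le_one
    rcases eq_or_lt_of_le (Finset.prod_nonneg (fun (i : Fin n) _ =>
        Finset.sum_nonneg fun k _ => mul_nonneg (hb.1 i x y k) (hv (x i) k))) with h0 | h0
    · rw [← h0, Real.logb_zero]
      apply Real.logb_nonneg one_lt_two
      calc (1 : ℝ) = ∏ _i : Fin n, (1 : ℝ) := (Finset.prod_const_one).symm
        _ ≤ ∏ i, (1 + ∑ k, v (x i) k) :=
            Finset.prod_le_prod (fun i _ => zero_le_one) (fun i _ => hC1 i)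
    · exact Real.logb_le_logb_of_le one_lt_two h0 hfle
  have hBbdd : BddAbove B := hAbdd.mono hBA
  rcases Set.eq_empty_or_nonempty A with hAe | hAne
  · have hBe : B = ∅ := Set.eq_empty_of_subset_empty (hAe ▸ hBA)
    rw [hAe, hBe, Real.sSup_empty, sub_zero]
    exact dirYX_nonneg hp
  · rw [sub_le_iff_le_add]
    apply csSup_le hAne
    rintro w ⟨b, hb, hpos, rfl⟩
    obtain ⟨bh, hbh, hconst, hposbh, hineq⟩ := exists_hat hp hv hb hpos
    have hmem : stockW p v bh ∈ B := ⟨bh, hbh, hconst, hposbh, rfl⟩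
    calc stockW p v b ≤ dirYX p + stockW p v bh := hineq
      _ ≤ dirYX p + sSup B := by
          have := le_csSup hBbdd hmem
          linarith
end
end

section
/- If the joint pmf p(x^n||y^n) is dyadic in the sense that each conditional probability p(x_i | x^{i-1}, y^i) is a power of 2 (or zero), then there exists an instantaneous lossless source encoder with causal side information achieving E[L(X^n||Y^n)] = Σ_{i=1}^n H(X_i | X^{i-1}, Y^i) exactly. -/
open scoped Classical
open Real

noncomputable section

variable {α β : Type} [Fintype α] [DecidableEq α] [Fintype β] [DecidableEq β]

/-- An instantaneous lossless source encoder with causal side information: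
`M i x y` is the binary codeword emitted at time `i`; it depends only on
`(x^i, y^i)`, and for every fixed history `(x^{i-1}, y^i)` the map
`x_i ↦ M i (x^{i-1} x_i) y` is prefix-free (in particular injective). -/
def IsCausalEncoder {n : ℕ}
    (M : Fin n → (Fin n → α) → (Fin n → β) → List Bool) : Prop :=
  (∀ i x x' y y', (∀ j, j ≤ i → x j = x' j) → (∀ j, j ≤ i → y j = y' j) →
    M i x y = M i x' y') ∧
  (∀ i x x' y, (∀ j, j < i → x j = x' j) → x i ≠ x' i →
    ¬ (M i x y <+: M i x' y))

/-- `L(x^n||y^n)`: total length of the concatenation `M₁(x₁,y₁) ⋯ Mₙ(xⁿ,yⁿ)`. -/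
def codeLen {n : ℕ} (M : Fin n → (Fin n → α) → (Fin n → β) → List Bool)
    (x : Fin n → α) (y : Fin n → β) : ℝ :=
  ∑ i, ((M i x y).length : ℝ)


namespace LCC11

/-! ### A dyadic Kraft-converse construction -/

/-- big-endian `l`-bit word of `m`. -/
def word (l m : ℕ) : List Bool := (List.range l).map (fun j => m.testBit (l - 1 - j))

lemma word_length (l m : ℕ) : (word l m).length = l := by simp [word]

lemma word_take {l l' : ℕ} (m : ℕ) (h : l ≤ l') :
    (word l' m).take l = word l (m / 2 ^ (l' - l)) := by
  unfold word
  rw [← List.map_take, List.take_range, min_eq_left h]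
  apply List.map_congr_left
  intro j hj
  rw [List.mem_range] at hj
  rw [← Nat.shiftRight_eq_div_pow, Nat.testBit_shiftRight]
  congr 1
  omega

lemma word_inj {l m m' : ℕ} (hm : m < 2 ^ l) (hm' : m' < 2 ^ l)
    (h : word l m = word l m') : m = m' := by
  apply Nat.eq_of_testBit_eq
  intro t
  by_cases ht : t < l
  · have hj : l - 1 - t < l := by omega
    have := congrArg (fun w : List Bool => w[l - 1 - t]?) h
    simp only [word, List.getElem?_map, List.getElem?_range hj, Option.map_some] at this
    have := Option.some.inj this
    simpa [show l - 1 - (l - 1 - t) = t by omega] using this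
  · rw [Nat.testBit_lt_two_pow (lt_of_lt_of_le hm (Nat.pow_le_pow_right (by norm_num) (by omega))),
      Nat.testBit_lt_two_pow (lt_of_lt_of_le hm' (Nat.pow_le_pow_right (by norm_num) (by omega)))]

lemma word_not_prefix {la lb ma mb : ℕ} (ha : ma < 2 ^ la) (hb : mb < 2 ^ lb)
    (hlab : la ≤ lb) (hne : ma ≠ mb / 2 ^ (lb - la)) : ¬ word la ma <+: word lb mb := by
  intro hpre
  apply hne
  apply word_inj ha
  · apply Nat.div_lt_of_lt_mul
    calc mb < 2 ^ lb := hb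
    _ = 2 ^ (lb - la) * 2 ^ la := by rw [← pow_add]; congr 1; omega
  · rw [List.prefix_iff_eq_take] at hpre
    rw [hpre, word_length, word_take _ hlab]

lemma kraft {α : Type} [Fintype α] [DecidableEq α] (k : α → ℕ)
    (hsum : ∑ a, ((2:ℝ)⁻¹) ^ (k a) = 1) :
    ∃ c : α → List Bool, (∀ a, (c a).length = k a) ∧
      ∀ a b : α, a ≠ b → ¬ c a <+: c b := by
  set K : ℕ := Finset.univ.sup k with hK
  have hkK : ∀ a : α, k a ≤ K := fun a => Finset.le_sup (Finset.mem_univ a)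
  have hnat : ∑ a : α, 2 ^ (K - k a) = 2 ^ K := by
    have hreal : ∑ a : α, ((2:ℝ)) ^ (K - k a) = 2 ^ K := by
      calc ∑ a : α, ((2:ℝ)) ^ (K - k a)
          = ∑ a : α, (2:ℝ) ^ K * ((2:ℝ)⁻¹) ^ (k a) := by
            apply Finset.sum_congr rfl; intro a _
            rw [inv_pow, eq_comm, mul_inv_eq_iff_eq_mul₀ (by positivity), ← pow_add]
            congr 1; have := hkK a; omega
        _ = 2 ^ K := by rw [← Finset.mul_sum, hsum, mul_one]
    have := hreal
    push_cast at this ⊢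
    exact_mod_cast this
  set le : α → α → Bool := fun a b => decide (k a ≤ k b) with hle
  set l : List α := Finset.univ.toList.mergeSort le with hl
  have hperm : l.Perm Finset.univ.toList := List.mergeSort_perm _ _
  have hmem : ∀ a : α, a ∈ l := fun a => hperm.mem_iff.2 (by simp)
  have hnd : l.Nodup := hperm.nodup_iff.2 (Finset.nodup_toList _)
  have hsorted : l.Pairwise (fun a b => le a b = true) :=
    List.pairwise_mergeSort (by intro a b c; simp only [hle, decide_eq_true_eq]; omega)
      (by intro a b; simp only [hle, Bool.or_eq_true, decide_eq_true_eq]; omega) _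
  set f : α → ℕ := fun a => 2 ^ (K - k a) with hf
  have hmapsum : (l.map f).sum = 2 ^ K := by
    rw [hperm.map f |>.sum_eq, Finset.sum_map_toList]; exact hnat
  set idx : α → ℕ := fun a => l.idxOf a with hidx
  have hidxlt : ∀ a, idx a < l.length := fun a => List.idxOf_lt_length_iff.2 (hmem a)
  have hgetidx : ∀ a, l[idx a]'(hidxlt a) = a := fun a => List.getElem_idxOf _
  set s : α → ℕ := fun a => ((l.take (idx a)).map f).sum with hs
  have hbefore : ∀ a : α, ∀ b ∈ l.take (idx a), k b ≤ k a := by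
    intro a b hb
    have hdrop : a ∈ l.drop (idx a) := by
      rw [List.drop_eq_getElem_cons (hidxlt a), hgetidx a]; exact List.mem_cons_self
    have := (List.pairwise_append.1 (by rw [List.take_append_drop (idx a) l]; exact hsorted)).2.2
    have := this b hb a hdrop
    simpa [hle] using this
  have hdvd : ∀ a : α, f a ∣ s a := by
    intro a
    apply List.dvd_sum
    intro t ht
    rw [List.mem_map] at ht
    obtain ⟨b, hb, rfl⟩ := ht
    exact pow_dvd_pow 2 (by have := hbefore a b hb; omega)
  have hsplit : ∀ m : ℕ, ((l.take m).map f).sum + ((l.drop m).map f).sum = 2 ^ K := by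
    intro m
    rw [← List.sum_append, ← List.map_append, List.take_append_drop, hmapsum]
  have hbound : ∀ a : α, s a + f a ≤ 2 ^ K := by
    intro a
    have h1 : ((l.take (idx a + 1)).map f).sum = s a + f a := by
      rw [List.take_succ]
      simp only [List.getElem?_eq_getElem (hidxlt a), hgetidx a]
      simp [hs]
    calc s a + f a = ((l.take (idx a + 1)).map f).sum := h1.symm
      _ ≤ _ := by rw [← hsplit (idx a + 1)]; omega
  have hfpos : ∀ a : α, 0 < f a := fun a => Nat.pow_pos (by norm_num)
  have hmono : ∀ a b : α, idx a < idx b → s a + f a ≤ s b := by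
    intro a b hab
    have h1 : ((l.take (idx a + 1)).map f).sum = s a + f a := by
      rw [List.take_succ]
      simp only [List.getElem?_eq_getElem (hidxlt a), hgetidx a]
      simp [hs]
    have htt : (l.take (idx b)).take (idx a + 1) = l.take (idx a + 1) := by
      rw [List.take_take]; congr 1; omega
    have hsplit2 := List.take_append_drop (idx a + 1) (l.take (idx b))
    have h2 : s a + f a ≤ ((l.take (idx b)).map f).sum := by
      rw [← hsplit2, htt, List.map_append, List.sum_append, h1]; omega
    have h3 : s b = ((l.take (idx b)).map f).sum := rfl
    omega
  set m : α → ℕ := fun a => s a / f a with hm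
  have hmlt : ∀ a : α, m a < 2 ^ (k a) := by
    intro a
    apply Nat.div_lt_of_lt_mul
    calc s a < 2 ^ K := by have := hbound a; have := hfpos a; omega
      _ = f a * 2 ^ (k a) := by rw [hf]; rw [← pow_add]; congr 1; have := hkK a; omega
  refine ⟨fun a => word (k a) (m a), fun a => word_length _ _, ?_⟩
  intro a b hab hpre
  have hlen : k a ≤ k b := by
    have := hpre.length_le
    simpa [word_length] using this
  refine word_not_prefix (hmlt a) (hmlt b) hlen ?_ hpre
  have hDm : m b / 2 ^ (k b - k a) = s b / 2 ^ (K - k a) := by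
    rw [hm, hf, Nat.div_div_eq_div_mul, ← pow_add]
    congr 2
    have := hkK b; omega
  rw [hDm]
  have hfa : f a = 2 ^ (K - k a) := rfl
  have hidxne : idx a ≠ idx b := by
    intro h
    apply hab
    rw [← hgetidx a, ← hgetidx b]
    congr 1
  rcases lt_or_gt_of_ne hidxne with h | h
  · have h1 := hmono a b h
    intro heq
    have h2 : s b / 2 ^ (K - k a) ≥ (s a + f a) / 2 ^ (K - k a) :=
      Nat.div_le_div_right h1
    rw [hfa] at h1 h2
    rw [Nat.add_div_right _ (Nat.pow_pos (by norm_num))] at h2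
    have hma : m a = s a / 2 ^ (K - k a) := rfl
    omega
  · have h1 := hmono b a h
    have hfb := hfpos b
    have hlt : s b < s a := by omega
    intro heq
    have hDdvd : 2 ^ (K - k a) ∣ s a := hdvd a
    have hsa : s a = 2 ^ (K - k a) * m a := (Nat.mul_div_cancel' hDdvd).symm
    have : s b / 2 ^ (K - k a) < m a := by
      apply Nat.div_lt_of_lt_mul
      calc s b < s a := hlt
        _ = 2 ^ (K - k a) * m a := hsa
    omega

/-! ### Probability helper lemmas -/

variable {α β : Type} [Fintype α] [DecidableEq α] [Fintype β] [DecidableEq β] {n : ℕ}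

lemma pr_congr (p : (Fin n → α) → (Fin n → β) → ℝ)
    {E E' : (Fin n → α) → (Fin n → β) → Prop} (h : ∀ x y, E x y ↔ E' x y) :
    pr p E = pr p E' := by
  unfold pr
  refine Finset.sum_congr rfl fun u _ => Finset.sum_congr rfl fun v _ => ?_
  exact if_congr (h u v) rfl rfl

lemma le_pr (p : (Fin n → α) → (Fin n → β) → ℝ) (hp0 : ∀ x y, 0 ≤ p x y)
    (E : (Fin n → α) → (Fin n → β) → Prop) (x : Fin n → α) (y : Fin n → β)
    (hE : E x y) : p x y ≤ pr p E := by
  unfold pr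
  have hnn : ∀ (u : Fin n → α) (v : Fin n → β), (0:ℝ) ≤ if E u v then p u v else 0 := by
    intro u v; by_cases h : E u v <;> simp [h, hp0 u v]
  calc p x y = if E x y then p x y else 0 := by rw [if_pos hE]
    _ ≤ ∑ v, if E x v then p x v else 0 :=
        Finset.single_le_sum (fun v _ => hnn x v) (Finset.mem_univ y)
    _ ≤ ∑ u, ∑ v, if E u v then p u v else 0 :=
        Finset.single_le_sum (fun u _ => Finset.sum_nonneg fun v _ => hnn u v)
          (Finset.mem_univ x)

/-- The history event at time `i`. -/
def histE (i : Fin n) (x : Fin n → α) (y : Fin n → β) :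
    (Fin n → α) → (Fin n → β) → Prop :=
  fun x' y' => (∀ j, j < i → x' j = x j) ∧ ∀ j : Fin n, (j : ℕ) ≤ (i : ℕ) → y' j = y j

/-- The conditional distribution of the `i`-th symbol given the history in `(x, y)`. -/
def qdist (p : (Fin n → α) → (Fin n → β) → ℝ) (i : Fin n)
    (x : Fin n → α) (y : Fin n → β) : α → ℝ :=
  fun a => condX p 0 i (Function.update x i a) y

lemma qdist_apply_self (p : (Fin n → α) → (Fin n → β) → ℝ) (i : Fin n)
    (x : Fin n → α) (y : Fin n → β) : qdist p i x y (x i) = condX p 0 i x y := by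
  unfold qdist
  rw [Function.update_eq_self]

lemma qdist_congr (p : (Fin n → α) → (Fin n → β) → ℝ) {i : Fin n}
    {x x' : Fin n → α} {y y' : Fin n → β}
    (hx : ∀ j, j < i → x j = x' j) (hy : ∀ j : Fin n, (j : ℕ) ≤ (i : ℕ) → y j = y' j) :
    qdist p i x y = qdist p i x' y' := by
  funext a
  show condX p 0 i (Function.update x i a) y = condX p 0 i (Function.update x' i a) y'
  unfold condX
  congr 1
  · apply pr_congr
    intro u v
    constructor
    · rintro ⟨h1, h2, h3⟩
      refine ⟨fun j hj => ?_, ?_, fun j hj => ?_⟩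
      · rw [h1 j hj, Function.update_of_ne (Fin.ne_of_lt hj),
          Function.update_of_ne (Fin.ne_of_lt hj)]
        exact hx j hj
      · rw [Function.update_self]
        rw [Function.update_self] at h2
        exact h2
      · rw [h3 j hj]
        exact hy j (by omega)
    · rintro ⟨h1, h2, h3⟩
      refine ⟨fun j hj => ?_, ?_, fun j hj => ?_⟩
      · rw [h1 j hj, Function.update_of_ne (Fin.ne_of_lt hj),
          Function.update_of_ne (Fin.ne_of_lt hj)]
        exact (hx j hj).symm
      · rw [Function.update_self]
        rw [Function.update_self] at h2
        exact h2
      · rw [h3 j hj]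
        exact (hy j (by omega)).symm
  · apply pr_congr
    intro u v
    constructor
    · rintro ⟨h1, h3⟩
      refine ⟨fun j hj => ?_, fun j hj => ?_⟩
      · rw [h1 j hj, Function.update_of_ne (Fin.ne_of_lt hj),
          Function.update_of_ne (Fin.ne_of_lt hj)]
        exact hx j hj
      · rw [h3 j hj]
        exact hy j (by omega)
    · rintro ⟨h1, h3⟩
      refine ⟨fun j hj => ?_, fun j hj => ?_⟩
      · rw [h1 j hj, Function.update_of_ne (Fin.ne_of_lt hj),
          Function.update_of_ne (Fin.ne_of_lt hj)]
        exact (hx j hj).symm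
      · rw [h3 j hj]
        exact (hy j (by omega)).symm

lemma qdist_eq_div (p : (Fin n → α) → (Fin n → β) → ℝ) (i : Fin n)
    (x : Fin n → α) (y : Fin n → β) (a : α) :
    qdist p i x y a =
      pr p (fun x' y' => histE i x y x' y' ∧ x' i = a) / pr p (histE i x y) := by
  show condX p 0 i (Function.update x i a) y = _
  unfold condX
  congr 1
  · apply pr_congr
    intro u v
    constructor
    · rintro ⟨h1, h2, h3⟩
      refine ⟨⟨fun j hj => ?_, fun j hj => h3 j (by omega)⟩, ?_⟩
      · rw [h1 j hj, Function.update_of_ne (Fin.ne_of_lt hj)]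
      · rw [h2, Function.update_self]
    · rintro ⟨⟨h1, h3⟩, h2⟩
      refine ⟨fun j hj => ?_, ?_, fun j hj => h3 j (by omega)⟩
      · rw [Function.update_of_ne (Fin.ne_of_lt hj)]
        exact h1 j hj
      · rw [Function.update_self]
        exact h2
  · apply pr_congr
    intro u v
    constructor
    · rintro ⟨h1, h3⟩
      refine ⟨fun j hj => ?_, fun j hj => h3 j (by omega)⟩
      rw [h1 j hj, Function.update_of_ne (Fin.ne_of_lt hj)]
    · rintro ⟨h1, h3⟩
      refine ⟨fun j hj => ?_, fun j hj => h3 j (by omega)⟩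
      rw [Function.update_of_ne (Fin.ne_of_lt hj)]
      exact h1 j hj

lemma qdist_sum (p : (Fin n → α) → (Fin n → β) → ℝ) (hp0 : ∀ x y, 0 ≤ p x y)
    (i : Fin n) (x : Fin n → α) (y : Fin n → β)
    (hD : 0 < pr p (histE i x y)) : ∑ a : α, qdist p i x y a = 1 := by
  rw [Finset.sum_congr rfl (fun a _ => qdist_eq_div p i x y a), ← Finset.sum_div]
  have hnum : ∑ a : α, pr p (fun x' y' => histE i x y x' y' ∧ x' i = a)
      = pr p (histE i x y) := by
    unfold pr
    rw [Finset.sum_comm]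
    refine Finset.sum_congr rfl fun u _ => ?_
    rw [Finset.sum_comm]
    refine Finset.sum_congr rfl fun v _ => ?_
    by_cases h : histE i x y u v
    · simp only [h, true_and]
      rw [Finset.sum_ite_eq]
      simp
    · simp [h]
  rw [hnum, div_self (ne_of_gt hD)]

/-! ### The encoder -/

/-- A fixed-length fallback prefix-free code on `α`. -/
def fbc : α → List Bool :=
  fun a => word (Fintype.card α) (((Fintype.equivFin α) a : ℕ))

lemma fbc_prefixfree : ∀ a b : α, a ≠ b → ¬ fbc a <+: fbc b := by
  intro a b hab hpre
  have hl : (fbc (α := α) a).length = (fbc (α := α) b).length := by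
    simp [fbc, word_length]
  have heq := hpre.eq_of_length hl
  have hb : ∀ c : α, (((Fintype.equivFin α) c : ℕ)) < 2 ^ Fintype.card α :=
    fun c => lt_of_lt_of_le (Fin.is_lt _) (Nat.lt_two_pow_self).le
  have := word_inj (hb a) (hb b) heq
  exact hab ((Fintype.equivFin α).injective (Fin.val_injective this))

/-- A code is good for `q` if its lengths match `q` exactly and it is prefix-free. -/
def GoodCode (q : α → ℝ) (c : α → List Bool) : Prop :=
  (∀ a, q a = (2:ℝ)⁻¹ ^ (c a).length) ∧ ∀ a b : α, a ≠ b → ¬ c a <+: c b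

/-- The canonical code associated with a distribution `q` on symbols. -/
def codeOf (q : α → ℝ) : α → List Bool :=
  if h : ∃ c : α → List Bool, GoodCode q c then h.choose else fbc

lemma codeOf_prefixfree (q : α → ℝ) : ∀ a b : α, a ≠ b → ¬ codeOf q a <+: codeOf q b := by
  unfold codeOf
  split_ifs with h
  · exact h.choose_spec.2
  · exact fbc_prefixfree

lemma codeOf_spec (q : α → ℝ) (h : ∃ c : α → List Bool, GoodCode q c) (a : α) :
    q a = (2:ℝ)⁻¹ ^ (codeOf q a).length := by
  unfold codeOf
  rw [dif_pos h]
  exact h.choose_spec.1 a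

lemma good_exists (q : α → ℝ) (hdy : ∀ a, ∃ k : ℕ, q a = (2:ℝ)⁻¹ ^ k)
    (hsum : ∑ a : α, q a = 1) : ∃ c : α → List Bool, GoodCode q c := by
  choose k hk using hdy
  obtain ⟨c, hlen, hpf⟩ := kraft k
    (by rw [← hsum]; exact Finset.sum_congr rfl fun a _ => (hk a).symm)
  exact ⟨c, fun a => by rw [hk a, hlen a], hpf⟩

end LCC11

/-- if every conditional probability `p(xᵢ | x^{i-1}, y^i)` (whenever
the conditioning history has positive probability) is dyadic, i.e. equals `2^{-k}`
for some nonnegative integer `k`, then there is an instantaneous lossless source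
encoder with causal side information achieving
`E[L(X^n||Y^n)] = Σᵢ H(Xᵢ | X^{i-1}, Y^i)` exactly. -/
theorem lossless_causal_coding_dyadic {n : ℕ}
    (p : (Fin n → α) → (Fin n → β) → ℝ) (hp : IsPmf p)
    (hdyadic : ∀ (i : Fin n) (x : Fin n → α) (y : Fin n → β),
      0 < pr p (fun x' y' => (∀ j, j < i → x' j = x j) ∧
          ∀ j : Fin n, (j : ℕ) ≤ (i : ℕ) → y' j = y j) →
      ∃ k : ℕ, condX p 0 i x y = (2 : ℝ)⁻¹ ^ k) :
    ∃ M : Fin n → (Fin n → α) → (Fin n → β) → List Bool,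
      IsCausalEncoder M ∧
      ∑ x, ∑ y, p x y * codeLen M x y = ∑ i, HcondX p 0 i := by
  classical
  refine ⟨fun i x y => LCC11.codeOf (LCC11.qdist p i x y) (x i), ⟨?_, ?_⟩, ?_⟩
  · -- depends only on (x^i, y^i)
    intro i x x' y y' hx hy
    have hq : LCC11.qdist p i x y = LCC11.qdist p i x' y' :=
      LCC11.qdist_congr p (fun j hj => hx j (le_of_lt hj)) (fun j hj => hy j hj)
    show LCC11.codeOf (LCC11.qdist p i x y) (x i) = LCC11.codeOf (LCC11.qdist p i x' y') (x' i)
    rw [hq, hx i le_rfl]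
  · -- prefix-free in the current symbol
    intro i x x' y hx hne
    have hq : LCC11.qdist p i x y = LCC11.qdist p i x' y :=
      LCC11.qdist_congr p hx (fun j _ => rfl)
    show ¬ LCC11.codeOf (LCC11.qdist p i x y) (x i) <+: LCC11.codeOf (LCC11.qdist p i x' y) (x' i)
    rw [hq]
    exact LCC11.codeOf_prefixfree _ (x i) (x' i) hne
  · -- expected length equals the causal conditional entropy
    have hrhs : ∑ i, HcondX p 0 i =
        ∑ x, ∑ y, ∑ i : Fin n, -(p x y * Real.logb 2 (condX p 0 i x y)) := by
      unfold HcondX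
      simp only [← Finset.sum_neg_distrib]
      rw [Finset.sum_comm]
      exact Finset.sum_congr rfl fun x _ => Finset.sum_comm
    rw [hrhs]
    refine Finset.sum_congr rfl fun x _ => Finset.sum_congr rfl fun y _ => ?_
    rcases eq_or_lt_of_le (hp.1 x y) with hpxy | hpxy
    · simp [← hpxy]
    · -- positive probability: history is positive, code is exact
      have hterm : ∀ i : Fin n,
          -(p x y * Real.logb 2 (condX p 0 i x y)) =
            p x y * ((LCC11.codeOf (LCC11.qdist p i x y) (x i)).length : ℝ) := by
        intro i
        have hDpos : 0 < pr p (LCC11.histE i x y) := by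
          refine lt_of_lt_of_le hpxy (LCC11.le_pr p hp.1 _ x y ?_)
          exact ⟨fun j _ => rfl, fun j _ => rfl⟩
        have hdy : ∀ a : α, ∃ k : ℕ, LCC11.qdist p i x y a = (2:ℝ)⁻¹ ^ k := by
          intro a
          have hpos' : 0 < pr p (fun x' y' =>
              (∀ j, j < i → x' j = Function.update x i a j) ∧
              ∀ j : Fin n, (j : ℕ) ≤ (i : ℕ) → y' j = y j) := by
            have heq : pr p (fun x' y' =>
                (∀ j, j < i → x' j = Function.update x i a j) ∧
                ∀ j : Fin n, (j : ℕ) ≤ (i : ℕ) → y' j = y j) = pr p (LCC11.histE i x y) := by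
              apply LCC11.pr_congr
              intro u v
              unfold LCC11.histE
              constructor
              · rintro ⟨h1, h3⟩
                exact ⟨fun j hj => by
                  rw [← Function.update_of_ne (Fin.ne_of_lt hj) a x]; exact h1 j hj, h3⟩
              · rintro ⟨h1, h3⟩
                exact ⟨fun j hj => by
                  rw [Function.update_of_ne (Fin.ne_of_lt hj)]; exact h1 j hj, h3⟩
            rw [heq]
            exact hDpos
          exact hdyadic i (Function.update x i a) y hpos'
        have hex : ∃ c : α → List Bool, LCC11.GoodCode (LCC11.qdist p i x y) c :=
          LCC11.good_exists _ hdy (LCC11.qdist_sum p hp.1 i x y hDpos)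
        have hcx : condX p 0 i x y =
            (2:ℝ)⁻¹ ^ (LCC11.codeOf (LCC11.qdist p i x y) (x i)).length := by
          rw [← LCC11.qdist_apply_self p i x y]
          exact LCC11.codeOf_spec _ hex (x i)
        rw [hcx, inv_pow, Real.logb_inv, Real.logb_pow,
          Real.logb_self_eq_one (by norm_num)]
        ring
      show p x y * codeLen (fun i x y => LCC11.codeOf (LCC11.qdist p i x y) (x i)) x y = _
      unfold codeLen
      rw [Finset.mul_sum]
      exact (Finset.sum_congr rfl fun i _ => hterm i).symm
end
end

section
/- Cost of ignoring the forward link: if (X^n, Y^n) has joint pmf p(x^n,y^n) and a lossless code is designed to be optimal for the (incorrect) distribution q(x^n,y^n) = p(y^n)·p(x^n||y^{n-1}), then the ideal expected codelength E[−log q(X^n,Y^n)] equals I(X^n → Y^n) + H(X^n, Y^n); i.e., the redundancy is exactly the directed information I(X^n → Y^n). -/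
open scoped Classical
open Real

noncomputable section

variable {α β : Type} [Fintype α] [DecidableEq α] [Fintype β] [DecidableEq β]

set_option linter.unusedSectionVars false

namespace CostAux

variable {α β : Type} [Fintype α] [DecidableEq α] [Fintype β] [DecidableEq β]

lemma pr_congr {n : ℕ} (p : (Fin n → α) → (Fin n → β) → ℝ)
    {E F : (Fin n → α) → (Fin n → β) → Prop} (h : ∀ x y, E x y ↔ F x y) :
    pr p E = pr p F := by
  unfold pr
  refine Finset.sum_congr rfl fun x _ => Finset.sum_congr rfl fun y _ => ?_
  simp [h x y]

lemma le_pr {n : ℕ} {p : (Fin n → α) → (Fin n → β) → ℝ} (hp0 : ∀ x y, 0 ≤ p x y)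
    {E : (Fin n → α) → (Fin n → β) → Prop} {x : Fin n → α} {y : Fin n → β}
    (hE : E x y) : p x y ≤ pr p E := by
  unfold pr
  have h2 : ∀ x' y', 0 ≤ (if E x' y' then p x' y' else 0) := by
    intro x' y'; split
    · exact hp0 x' y'
    · exact le_rfl
  calc p x y = (if E x y then p x y else 0) := by rw [if_pos hE]
    _ ≤ ∑ y', if E x y' then p x y' else 0 :=
        Finset.single_le_sum (fun y' _ => h2 x y') (Finset.mem_univ y)
    _ ≤ ∑ x', ∑ y', if E x' y' then p x' y' else 0 :=
        Finset.single_le_sum (f := fun x' => ∑ y', if E x' y' then p x' y' else 0)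
          (fun x' _ => Finset.sum_nonneg fun y' _ => h2 x' y') (Finset.mem_univ x)

/-- `G p x y a b` is the probability that `x'` agrees with `x` below `a` and
`y'` agrees with `y` below `b`. -/
def G {n : ℕ} (p : (Fin n → α) → (Fin n → β) → ℝ)
    (x : Fin n → α) (y : Fin n → β) (a b : ℕ) : ℝ :=
  pr p (fun x' y' => (∀ j : Fin n, (j : ℕ) < a → x' j = x j) ∧
    (∀ j : Fin n, (j : ℕ) < b → y' j = y j))

lemma G_pos {n : ℕ} {p : (Fin n → α) → (Fin n → β) → ℝ} (hp : IsPmf p)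
    {x : Fin n → α} {y : Fin n → β} (hxy : 0 < p x y) (a b : ℕ) :
    0 < G p x y a b :=
  lt_of_lt_of_le hxy (le_pr hp.1 ⟨fun _ _ => rfl, fun _ _ => rfl⟩)

lemma G_zero_zero {n : ℕ} {p : (Fin n → α) → (Fin n → β) → ℝ} (hp : IsPmf p)
    (x : Fin n → α) (y : Fin n → β) : G p x y 0 0 = 1 := by
  have h : G p x y 0 0 = pr p (fun _ _ => True) := by
    apply pr_congr; intro x' y'; simp
  rw [h]
  unfold pr
  simp only [if_true]
  exact hp.2

lemma G_nn {n : ℕ} {p : (Fin n → α) → (Fin n → β) → ℝ} (hp : IsPmf p)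
    (x : Fin n → α) (y : Fin n → β) : G p x y n n = p x y := by
  have h : G p x y n n = pr p (fun x' y' => x' = x ∧ y' = y) := by
    apply pr_congr
    intro x' y'
    constructor
    · rintro ⟨h1, h2⟩
      exact ⟨funext fun j => h1 j j.isLt, funext fun j => h2 j j.isLt⟩
    · rintro ⟨rfl, rfl⟩
      exact ⟨fun _ _ => rfl, fun _ _ => rfl⟩
  rw [h]
  unfold pr
  rw [Finset.sum_eq_single x]
  · rw [Finset.sum_eq_single y]
    · rw [if_pos ⟨rfl, rfl⟩]
    · intro b _ hb; exact if_neg (fun hc => hb hc.2)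
    · intro hmem; exact absurd (Finset.mem_univ y) hmem
  · intro b _ hb
    exact Finset.sum_eq_zero fun y' _ => if_neg (fun hc => hb hc.1)
  · intro hmem; exact absurd (Finset.mem_univ x) hmem

lemma G_pY {n : ℕ} {p : (Fin n → α) → (Fin n → β) → ℝ}
    (x : Fin n → α) (y : Fin n → β) : G p x y 0 n = pY p y := by
  have h : G p x y 0 n = pr p (fun x' y' => y' = y) := by
    apply pr_congr
    intro x' y'
    constructor
    · rintro ⟨_, h2⟩
      exact funext fun j => h2 j j.isLt
    · rintro rfl
      exact ⟨fun j hj => absurd hj (Nat.not_lt_zero _), fun _ _ => rfl⟩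
  rw [h]
  unfold pr pY
  refine Finset.sum_congr rfl fun x' _ => ?_
  rw [Finset.sum_eq_single y]
  · rw [if_pos rfl]
  · intro b _ hb; exact if_neg hb
  · intro hmem; exact absurd (Finset.mem_univ y) hmem

lemma condY_n_eq {n : ℕ} (p : (Fin n → α) → (Fin n → β) → ℝ)
    (x : Fin n → α) (y : Fin n → β) (i : Fin n) :
    condY p n i x y = G p x y 0 ((i : ℕ) + 1) / G p x y 0 (i : ℕ) := by
  unfold condY G
  congr 1
  · apply pr_congr
    intro x' y'
    constructor
    · rintro ⟨h1, h2, _⟩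
      refine ⟨fun j hj => absurd hj (Nat.not_lt_zero _), fun j hj => ?_⟩
      rcases Nat.lt_succ_iff_lt_or_eq.mp hj with h | h
      · exact h1 j (Fin.lt_def.mpr h)
      · have : j = i := Fin.ext h
        subst this; exact h2
    · rintro ⟨_, h2⟩
      refine ⟨fun j hj => h2 j (Nat.lt_succ_of_lt (Fin.lt_def.mp hj)),
        h2 i (Nat.lt_succ_self _), fun j hj => ?_⟩
      exact absurd hj (by have := i.isLt; omega)
  · apply pr_congr
    intro x' y'
    constructor
    · rintro ⟨h1, _⟩
      exact ⟨fun j hj => absurd hj (Nat.not_lt_zero _), fun j hj => h1 j (Fin.lt_def.mpr hj)⟩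
    · rintro ⟨_, h2⟩
      exact ⟨fun j hj => h2 j (Fin.lt_def.mp hj), fun j hj => absurd hj (by have := i.isLt; omega)⟩

lemma condY_zero_eq {n : ℕ} (p : (Fin n → α) → (Fin n → β) → ℝ)
    (x : Fin n → α) (y : Fin n → β) (i : Fin n) :
    condY p 0 i x y = G p x y ((i : ℕ) + 1) ((i : ℕ) + 1) / G p x y ((i : ℕ) + 1) (i : ℕ) := by
  unfold condY G
  congr 1
  · apply pr_congr
    intro x' y'
    constructor
    · rintro ⟨h1, h2, h3⟩
      refine ⟨fun j hj => h3 j (by omega), fun j hj => ?_⟩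
      rcases Nat.lt_succ_iff_lt_or_eq.mp hj with h | h
      · exact h1 j (Fin.lt_def.mpr h)
      · have : j = i := Fin.ext h
        subst this; exact h2
    · rintro ⟨h1, h2⟩
      exact ⟨fun j hj => h2 j (Nat.lt_succ_of_lt (Fin.lt_def.mp hj)),
        h2 i (Nat.lt_succ_self _), fun j hj => h1 j (by omega)⟩
  · apply pr_congr
    intro x' y'
    constructor
    · rintro ⟨h1, h3⟩
      exact ⟨fun j hj => h3 j (by omega), fun j hj => h1 j (Fin.lt_def.mpr hj)⟩
    · rintro ⟨h1, h2⟩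
      exact ⟨fun j hj => h2 j (Fin.lt_def.mp hj), fun j hj => h1 j (by omega)⟩

lemma condX_one_eq {n : ℕ} (p : (Fin n → α) → (Fin n → β) → ℝ)
    (x : Fin n → α) (y : Fin n → β) (i : Fin n) :
    condX p 1 i x y = G p x y ((i : ℕ) + 1) (i : ℕ) / G p x y (i : ℕ) (i : ℕ) := by
  unfold condX G
  refine congrArg₂ (fun a b : ℝ => a / b) ?_ ?_
  · apply pr_congr
    intro x' y'
    constructor
    · rintro ⟨h1, h2, h3⟩
      refine ⟨fun j hj => ?_, fun j hj => h3 j (by omega)⟩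
      rcases Nat.lt_succ_iff_lt_or_eq.mp hj with h | h
      · exact h1 j (Fin.lt_def.mpr h)
      · have : j = i := Fin.ext h
        subst this; exact h2
    · rintro ⟨h1, h2⟩
      exact ⟨fun j hj => h1 j (Nat.lt_succ_of_lt (Fin.lt_def.mp hj)),
        h1 i (Nat.lt_succ_self _), fun j hj => h2 j (by omega)⟩
  · apply pr_congr
    intro x' y'
    constructor
    · rintro ⟨h1, h3⟩
      exact ⟨fun j hj => h1 j (Fin.lt_def.mpr hj), fun j hj => h3 j (by omega)⟩
    · rintro ⟨h1, h2⟩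
      exact ⟨fun j hj => h1 j (Fin.lt_def.mp hj), fun j hj => h2 j (by omega)⟩

lemma prod_ratio (f : ℕ → ℝ) (hf : ∀ k, f k ≠ 0) (m : ℕ) :
    ∏ i ∈ Finset.range m, (f (i + 1) / f i) = f m / f 0 := by
  induction m with
  | zero => simp [div_self (hf 0)]
  | succ m ih =>
    rw [Finset.prod_range_succ, ih]
    have h0 := hf 0; have hm := hf m
    field_simp

lemma prod_condY_n {n : ℕ} {p : (Fin n → α) → (Fin n → β) → ℝ} (hp : IsPmf p)
    {x : Fin n → α} {y : Fin n → β} (hxy : 0 < p x y) :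
    ∏ i : Fin n, condY p n i x y = pY p y := by
  have h : ∀ i : Fin n, condY p n i x y
      = (fun k => G p x y 0 k) ((i : ℕ) + 1) / (fun k => G p x y 0 k) (i : ℕ) :=
    fun i => condY_n_eq p x y i
  rw [Finset.prod_congr rfl fun i _ => h i,
    Fin.prod_univ_eq_prod_range (fun k => (fun k => G p x y 0 k) (k + 1) / (fun k => G p x y 0 k) k) n,
    prod_ratio _ (fun k => (G_pos hp hxy 0 k).ne') n]
  simp [G_pY x y, G_zero_zero hp x y]

lemma chain_rule {n : ℕ} {p : (Fin n → α) → (Fin n → β) → ℝ} (hp : IsPmf p)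
    {x : Fin n → α} {y : Fin n → β} (hxy : 0 < p x y) :
    ccX p 1 x y * ccY p 0 x y = p x y := by
  unfold ccX ccY
  rw [← Finset.prod_mul_distrib]
  have h : ∀ i : Fin n, condX p 1 i x y * condY p 0 i x y
      = (fun k => G p x y k k) ((i : ℕ) + 1) / (fun k => G p x y k k) (i : ℕ) := by
    intro i
    rw [condX_one_eq p x y i, condY_zero_eq p x y i]
    have h1 := (G_pos hp hxy ((i : ℕ) + 1) (i : ℕ)).ne'
    have h2 := (G_pos hp hxy (i : ℕ) (i : ℕ)).ne'
    have h3 := (G_pos hp hxy ((i : ℕ) + 1) ((i : ℕ) + 1)).ne'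
    field_simp
  rw [Finset.prod_congr rfl fun i _ => h i,
    Fin.prod_univ_eq_prod_range (fun k => (fun k => G p x y k k) (k + 1) / (fun k => G p x y k k) k) n,
    prod_ratio _ (fun k => (G_pos hp hxy k k).ne') n]
  simp [G_nn hp x y, G_zero_zero hp x y]

end CostAux

/-- cost of ignoring the forward link. If the code is designed for the
incorrect distribution `q(x^n,y^n) = p(y^n) p(x^n||y^{n-1})`, the ideal expected
codelength `E_p[−log q(X^n,Y^n)]` equals `I(X^n → Y^n) + H(X^n,Y^n)`; i.e. the
redundancy is exactly the directed information `I(X^n → Y^n)`. -/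
theorem cost_of_ignoring_forward_link {n : ℕ}
    (p : (Fin n → α) → (Fin n → β) → ℝ) (hp : IsPmf p)
    (hq : ∀ x y, 0 < p x y → 0 < pY p y * ccX p 1 x y) :
    -(∑ x, ∑ y, p x y * Real.logb 2 (pY p y * ccX p 1 x y)) =
      dirXY p + Hjoint p := by
  classical
  have key : ∀ (x : Fin n → α) (y : Fin n → β),
      -(p x y * Real.logb 2 (pY p y * ccX p 1 x y)) =
      (∑ i, p x y * Real.logb 2 (condY p 0 i x y / condY p n i x y)) -
        p x y * Real.logb 2 (p x y) := by
    intro x y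
    rcases eq_or_lt_of_le (hp.1 x y) with h0 | hpos
    · simp [← h0]
    · have hG : ∀ a b, 0 < CostAux.G p x y a b := fun a b => CostAux.G_pos hp hpos a b
      have hpY : 0 < pY p y := by rw [← CostAux.G_pY (p := p) x y]; exact hG 0 n
      have hcondYn : ∀ i : Fin n, 0 < condY p n i x y := fun i => by
        rw [CostAux.condY_n_eq p x y i]; exact div_pos (hG _ _) (hG _ _)
      have hcondY0 : ∀ i : Fin n, 0 < condY p 0 i x y := fun i => by
        rw [CostAux.condY_zero_eq p x y i]; exact div_pos (hG _ _) (hG _ _)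
      have hcondX1 : ∀ i : Fin n, 0 < condX p 1 i x y := fun i => by
        rw [CostAux.condX_one_eq p x y i]; exact div_pos (hG _ _) (hG _ _)
      have hccY : 0 < ccY p 0 x y := Finset.prod_pos fun i _ => hcondY0 i
      have hccX : 0 < ccX p 1 x y := Finset.prod_pos fun i _ => hcondX1 i
      have hprod : ∏ i : Fin n, condY p n i x y = pY p y := CostAux.prod_condY_n hp hpos
      have hchain : ccX p 1 x y * ccY p 0 x y = p x y := CostAux.chain_rule hp hpos
      have hlogp : Real.logb 2 (p x y)
          = Real.logb 2 (ccX p 1 x y) + Real.logb 2 (ccY p 0 x y) := by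
        rw [← hchain, Real.logb_mul hccX.ne' hccY.ne']
      have hsum : ∑ i : Fin n, Real.logb 2 (condY p 0 i x y / condY p n i x y)
          = Real.logb 2 (ccY p 0 x y) - Real.logb 2 (pY p y) := by
        rw [Finset.sum_congr rfl fun i _ =>
          Real.logb_div (hcondY0 i).ne' (hcondYn i).ne']
        rw [Finset.sum_sub_distrib,
          ← Real.logb_prod Finset.univ _ (fun i _ => (hcondY0 i).ne'),
          ← Real.logb_prod Finset.univ _ (fun i _ => (hcondYn i).ne'), hprod]
        rfl
      rw [← Finset.mul_sum, hsum, Real.logb_mul hpY.ne' hccX.ne', hlogp]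
      ring
  have swap : dirXY p
      = ∑ x, ∑ y, ∑ i, p x y * Real.logb 2 (condY p 0 i x y / condY p n i x y) := by
    unfold dirXY cmiXY
    rw [Finset.sum_comm]
    exact Finset.sum_congr rfl fun x _ => Finset.sum_comm
  rw [swap]
  unfold Hjoint
  rw [← sub_eq_add_neg, ← Finset.sum_sub_distrib, ← Finset.sum_neg_distrib]
  refine Finset.sum_congr rfl fun x _ => ?_
  rw [← Finset.sum_sub_distrib, ← Finset.sum_neg_distrib]
  exact Finset.sum_congr rfl fun y _ => key x y
end
end
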